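/- arXiv:1401.6755 — 2 statements merged into one kernel-verified Lean document; each statement's English description precedes it below -/
import Mathlib

section
/- Let G be a finite group whose power graph P(G) is C_4-free, suppose |G| is not a prime power, and suppose the center Z(G) is a p-group (for a prime p) that is not elementary abelian, i.e. Z(G) contains an element of order p^2. Then Z(G) is cyclic, and for every prime q ≠ p dividing |G|, every Sylow q-subgroup of G has exponent q. Moreover, for every nontrivial q-element x ∈ G with q a prime different from p: the primes dividing |C_G(x)| are exactly p and q, and the Sylow p-subgroup of C_G(x) is cyclic and normal in C_G(x). -/
/-- Adjacency in the power graph of a group: two distinct elements are adjacent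
iff one is a power of the other. -/
def pgAdj {G : Type*} [Group G] (x y : G) : Prop :=
  x ≠ y ∧ (x ∈ Subgroup.zpowers y ∨ y ∈ Subgroup.zpowers x)

/-- The power graph contains an induced 4-cycle. -/
def pgHasInducedC4 (G : Type*) [Group G] : Prop :=
  ∃ x u y v : G,
    x ≠ u ∧ x ≠ y ∧ x ≠ v ∧ u ≠ y ∧ u ≠ v ∧ y ≠ v ∧
    pgAdj x u ∧ pgAdj u y ∧ pgAdj y v ∧ pgAdj v x ∧
    ¬ pgAdj x y ∧ ¬ pgAdj u v

/-- The power graph is `C₄`-free. -/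
def pgC4Free (G : Type*) [Group G] : Prop := ¬ pgHasInducedC4 G



section numeric

/-- If `b < a` and `p` is prime coprime to `m`, then `p^a` does not divide `p^b * m`. -/
lemma not_pp_dvd {p : ℕ} (hp : p.Prime) {a b m : ℕ} (hba : b < a)
    (hcop : Nat.Coprime p m) : ¬ p ^ a ∣ p ^ b * m := by
  intro hd
  have h1 : p ^ a ∣ p ^ b := (Nat.Coprime.pow_left a hcop).dvd_of_dvd_mul_right hd
  have := (Nat.pow_dvd_pow_iff_le_right hp.one_lt).mp h1
  omega

end numeric

section grp

open Subgroup

variable {G : Type*} [Group G] [Finite G]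

lemma memZpow {u : G} {k : ℕ} (hk : Nat.Coprime k (orderOf u)) :
    u ∈ zpowers (u ^ k) := by
  rcases eq_or_ne (orderOf u) 1 with h1 | h1
  · rw [orderOf_eq_one_iff.mp h1]
    exact Subgroup.one_mem _
  · have hlt : 1 < orderOf u := lt_of_le_of_ne (orderOf_pos u) (Ne.symm h1)
    obtain ⟨m, -, hm⟩ := Nat.exists_mul_mod_eq_one_of_coprime hk hlt
    rw [Subgroup.mem_zpowers_iff]
    exact ⟨(m : ℤ), by rw [zpow_natCast, ← pow_mul, ← pow_mod_orderOf, hm, pow_one]⟩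

lemma mem_zpowers_mul_left {u v : G} (hc : Commute u v)
    (hco : Nat.Coprime (orderOf u) (orderOf v)) : u ∈ zpowers (u * v) := by
  have h1 : (u * v) ^ orderOf v = u ^ orderOf v := by
    rw [hc.mul_pow, pow_orderOf_eq_one, mul_one]
  have h2 : u ∈ zpowers (u ^ orderOf v) := memZpow hco.symm
  have h3 : zpowers (u ^ orderOf v) ≤ zpowers (u * v) := by
    rw [← h1]
    exact zpowers_le.mpr (Subgroup.pow_mem _ (mem_zpowers _) _)
  exact h3 h2

lemma mem_zpowers_mul_right {u v : G} (hc : Commute u v)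
    (hco : Nat.Coprime (orderOf u) (orderOf v)) : v ∈ zpowers (u * v) := by
  have := mem_zpowers_mul_left hc.symm hco.symm
  rwa [← hc.eq] at this

lemma not_pgAdj_of_orders {a b : G} (h1 : ¬ orderOf a ∣ orderOf b)
    (h2 : ¬ orderOf b ∣ orderOf a) : ¬ pgAdj a b := by
  rintro ⟨_, hor | hor⟩
  · exact h1 (orderOf_dvd_of_mem_zpowers hor)
  · exact h2 (orderOf_dvd_of_mem_zpowers hor)

lemma c4_of (h : pgC4Free G) {a b u v : G}
    (hau : a ≠ u) (hab : a ≠ b) (hav : a ≠ v) (hub : u ≠ b) (huv : u ≠ v) (hbv : b ≠ v)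
    (h1 : u ∈ zpowers a) (h2 : u ∈ zpowers b)
    (h3 : v ∈ zpowers a) (h4 : v ∈ zpowers b)
    (nab : ¬ pgAdj a b) (nuv : ¬ pgAdj u v) : False :=
  h ⟨a, u, b, v, hau, hab, hav, hub, huv, hbv,
    ⟨hau, Or.inr h1⟩, ⟨hub, Or.inl h2⟩, ⟨hbv, Or.inr h4⟩, ⟨fun e => hav e.symm, Or.inl h3⟩,
    nab, nuv⟩

/-- order of a power inside a prime power order element -/
lemma orderOf_pow_prime {g : G} {q n k : ℕ} (hq : 0 < q) (h : orderOf g = q ^ n)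
    (hk : k ≤ n) : orderOf (g ^ q ^ k) = q ^ (n - k) := by
  rw [orderOf_pow, h, Nat.gcd_eq_right (pow_dvd_pow q hk), Nat.pow_div hk hq]

end grp

section core

open Subgroup

variable {G : Type*} [Group G] [Finite G]

lemma prime_dvd_ne {p q : ℕ} (hp : p.Prime) (hq : q.Prime) (hpq : p ≠ q) {m : ℕ}
    (hm : p ∣ m) : m ≠ q :=
  fun e => hpq ((Nat.prime_dvd_prime_iff_eq hp hq).mp (e ▸ hm))

lemma nd1 {p q : ℕ} (hp : p.Prime) (hpq : Nat.Coprime p q) :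
    ¬ (p ^ 2 * q ∣ p * q ^ 2) := by
  intro hd
  have h2 : p ^ 2 ∣ p ^ 1 * q ^ 2 := by
    rw [pow_one]; exact (dvd_mul_right _ _).trans hd
  exact not_pp_dvd hp one_lt_two (hpq.pow_right 2) h2

/-- key splitting lemma: if `w * x` is a power of `w' * x` with `w, w'` p-elements
and `x` of order `q`, then `w` is a power of `w'`. -/
lemma split_mem {p q : ℕ} (hp : p.Prime) (hq : q.Prime) (hpq : p ≠ q)
    {w w' x : G} {i j : ℕ} (hw : orderOf w = p ^ i) (hw' : orderOf w' = p ^ j)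
    (hx : orderOf x = q) (cw'x : Commute w' x)
    (hmem : w * x ∈ zpowers (w' * x)) : w ∈ zpowers w' := by
  obtain ⟨k, hk⟩ := Subgroup.mem_zpowers_iff.mp hmem
  rw [cw'x.mul_zpow] at hk
  have hw_eq : w = w' ^ k * x ^ (k - 1) := by
    rw [zpow_sub_one, ← mul_assoc, hk, mul_inv_cancel_right]
  have hA : orderOf (w' ^ k) ∣ p ^ j :=
    hw' ▸ orderOf_dvd_of_mem_zpowers (Subgroup.zpow_mem _ (Subgroup.mem_zpowers _) k)
  have hB : orderOf (x ^ (k - 1)) ∣ q :=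
    hx ▸ orderOf_dvd_of_mem_zpowers (Subgroup.zpow_mem _ (Subgroup.mem_zpowers _) _)
  have copPQ : Nat.Coprime p q := (Nat.coprime_primes hp hq).mpr hpq
  have cop : Nat.Coprime (orderOf (w' ^ k)) (orderOf (x ^ (k - 1))) :=
    Nat.Coprime.coprime_dvd_left hA (Nat.Coprime.coprime_dvd_right hB (copPQ.pow_left j))
  have hABc : Commute (w' ^ k) (x ^ (k - 1)) := cw'x.zpow_zpow k (k - 1)
  have horder : orderOf w = orderOf (w' ^ k) * orderOf (x ^ (k - 1)) := by
    rw [hw_eq]; exact hABc.orderOf_mul_eq_mul_orderOf_of_coprime cop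
  have hBp : orderOf (x ^ (k - 1)) ∣ p ^ i := hw ▸ horder ▸ dvd_mul_left _ _
  have hB1 : orderOf (x ^ (k - 1)) = 1 :=
    Nat.eq_one_of_dvd_one
      ((copPQ.pow_left i : Nat.gcd (p ^ i) q = 1) ▸ Nat.dvd_gcd hBp hB)
  have : x ^ (k - 1) = 1 := orderOf_eq_one_iff.mp hB1
  rw [Subgroup.mem_zpowers_iff]
  exact ⟨k, by rw [hw_eq, this, mul_one]⟩

/-- no element of order `q^2` exists for a prime `q` different from `p`. -/
lemma no_q_squared (h : pgC4Free G) {p q : ℕ} (hp : p.Prime) (hq : q.Prime)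
    (hpq : p ≠ q) {z y : G} (hzc : ∀ g, Commute z g)
    (hzo : orderOf z = p ^ 2) (hyo : orderOf y = q ^ 2) : False := by
  have copPQ : Nat.Coprime p q := (Nat.coprime_primes hp hq).mpr hpq
  have hcp : orderOf (z ^ p) = p := by
    have := orderOf_pow_prime (g := z) hp.pos hzo (k := 1) one_le_two
    simpa using this
  have hdq : orderOf (y ^ q) = q := by
    have := orderOf_pow_prime (g := y) hq.pos hyo (k := 1) one_le_two
    simpa using this
  have cop1 : Nat.Coprime (orderOf z) (orderOf (y ^ q)) := by
    rw [hzo, hdq]; exact copPQ.pow_left 2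
  have cop2 : Nat.Coprime (orderOf (z ^ p)) (orderOf y) := by
    rw [hcp, hyo]; exact copPQ.pow_right 2
  have cb : Commute (z ^ p) y := (hzc y).pow_left p
  have oa : orderOf (z * y ^ q) = p ^ 2 * q := by
    rw [(hzc (y ^ q)).orderOf_mul_eq_mul_orderOf_of_coprime cop1, hzo, hdq]
  have ob : orderOf (z ^ p * y) = p * q ^ 2 := by
    rw [cb.orderOf_mul_eq_mul_orderOf_of_coprime cop2, hcp, hyo]
  -- memberships
  have m1 : z ^ p ∈ zpowers (z * y ^ q) :=
    Subgroup.pow_mem _ (mem_zpowers_mul_left (hzc _) cop1) p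
  have m2 : z ^ p ∈ zpowers (z ^ p * y) := mem_zpowers_mul_left cb cop2
  have m3 : y ^ q ∈ zpowers (z * y ^ q) := mem_zpowers_mul_right (hzc _) cop1
  have m4 : y ^ q ∈ zpowers (z ^ p * y) :=
    Subgroup.pow_mem _ (mem_zpowers_mul_right cb cop2) q
  -- nonadjacency
  have nab : ¬ pgAdj (z * y ^ q) (z ^ p * y) := by
    apply not_pgAdj_of_orders <;> rw [oa, ob]
    · exact nd1 hp copPQ
    · intro hd
      have h2 : q ^ 2 ∣ q ^ 1 * p ^ 2 := by
        rw [pow_one, mul_comm q (p ^ 2)]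
        exact (dvd_mul_left _ _).trans hd
      exact not_pp_dvd hq one_lt_two (copPQ.symm.pow_right 2) h2
  have nuv : ¬ pgAdj (z ^ p) (y ^ q) := by
    apply not_pgAdj_of_orders <;> rw [hcp, hdq]
    · exact hp.coprime_iff_not_dvd.mp copPQ
    · exact hq.coprime_iff_not_dvd.mp copPQ.symm
  -- distinctness via orders
  have dq : q ∣ p ^ 2 * q := dvd_mul_left _ _
  have dp : p ∣ p ^ 2 * q := dvd_mul_of_dvd_left (dvd_pow_self p two_ne_zero) _
  have dq' : q ∣ p * q ^ 2 := dvd_mul_of_dvd_right (dvd_pow_self q two_ne_zero) p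
  have dp' : p ∣ p * q ^ 2 := dvd_mul_right _ _
  refine c4_of h (a := z * y ^ q) (b := z ^ p * y) (u := z ^ p) (v := y ^ q)
    ?_ ?_ ?_ ?_ ?_ ?_ m1 m2 m3 m4 nab nuv
  · intro e; have : p ^ 2 * q = p := by rw [← oa, e, hcp]
    exact prime_dvd_ne hq hp (Ne.symm hpq) dq this
  · intro e; have : p ^ 2 * q = p * q ^ 2 := by rw [← oa, e, ob]
    exact nd1 hp copPQ (this ▸ dvd_rfl)
  · intro e; have : p ^ 2 * q = q := by rw [← oa, e, hdq]
    exact prime_dvd_ne hp hq hpq dp this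
  · intro e; have : p * q ^ 2 = p := by rw [← ob, ← e, hcp]
    exact prime_dvd_ne hq hp (Ne.symm hpq) dq' this
  · intro e; have : p = q := by rw [← hcp, e, hdq]
    exact hpq this
  · intro e; have : p * q ^ 2 = q := by rw [← ob, e, hdq]
    exact prime_dvd_ne hp hq hpq dp' this

end core

section core2

open Subgroup

variable {G : Type*} [Group G] [Finite G]

/-- every element of order `p` commuting with a `q`-element lies in `⟨z⟩`. -/
lemma order_p_in_z (h : pgC4Free G) {p q : ℕ} (hp : p.Prime) (hq : q.Prime)
    (hpq : p ≠ q) {z w x : G} (hzc : ∀ g, Commute z g) (hzo : orderOf z = p ^ 2)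
    (hwo : orderOf w = p) (hxo : orderOf x = q) (cwx : Commute w x) :
    w ∈ zpowers z := by
  by_contra hnot
  haveI : Fact p.Prime := ⟨hp⟩
  have copPQ : Nat.Coprime p q := (Nat.coprime_primes hp hq).mpr hpq
  have hcp : orderOf (z ^ p) = p := by
    have := orderOf_pow_prime (g := z) hp.pos hzo (k := 1) one_le_two
    simpa using this
  have hzp1 : z ^ p ≠ 1 := by
    intro e
    rw [e, orderOf_one] at hcp
    exact hp.ne_one hcp.symm
  have hzw : Commute z w := hzc w
  have hwp : w ^ p = 1 := by rw [← hwo]; exact pow_orderOf_eq_one w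
  have e1 : (z * w) ^ p = z ^ p := by rw [hzw.mul_pow, hwp, mul_one]
  have ozw : orderOf (z * w) = p ^ 2 := by
    have e2 : (z * w) ^ p ^ 2 = 1 := by
      have hw2 : w ^ p ^ 2 = 1 := by rw [pow_two, pow_mul, hwp, one_pow]
      have hz2 : z ^ p ^ 2 = 1 := by rw [← hzo]; exact pow_orderOf_eq_one z
      rw [hzw.mul_pow, hw2, hz2, one_mul]
    have := orderOf_eq_prime_pow (x := z * w) (n := 1)
      (by rw [pow_one, e1]; exact hzp1) (by norm_num at e2 ⊢; exact e2)
    rw [this]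
  have czwx : Commute (z * w) x := (hzc x).mul_left cwx
  have cop1 : Nat.Coprime (orderOf z) (orderOf x) := by
    rw [hzo, hxo]; exact copPQ.pow_left 2
  have cop2 : Nat.Coprime (orderOf (z * w)) (orderOf x) := by
    rw [ozw, hxo]; exact copPQ.pow_left 2
  have oa : orderOf (z * x) = p ^ 2 * q := by
    rw [(hzc x).orderOf_mul_eq_mul_orderOf_of_coprime cop1, hzo, hxo]
  have ob : orderOf (z * w * x) = p ^ 2 * q := by
    rw [czwx.orderOf_mul_eq_mul_orderOf_of_coprime cop2, ozw, hxo]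
  have m1 : z ^ p ∈ zpowers (z * x) :=
    Subgroup.pow_mem _ (mem_zpowers_mul_left (hzc x) cop1) p
  have m2 : z ^ p ∈ zpowers (z * w * x) :=
    e1 ▸ Subgroup.pow_mem _ (mem_zpowers_mul_left czwx cop2) p
  have m3 : x ∈ zpowers (z * x) := mem_zpowers_mul_right (hzc x) cop1
  have m4 : x ∈ zpowers (z * w * x) := mem_zpowers_mul_right czwx cop2
  have nab : ¬ pgAdj (z * x) (z * w * x) := by
    rintro ⟨_, hor | hor⟩
    · -- z * x ∈ zpowers ((z*w) * x), hence z ∈ zpowers (z*w)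
      have hzzw : z ∈ zpowers (z * w) := split_mem hp hq hpq hzo ozw hxo czwx hor
      obtain ⟨k, hk⟩ := Subgroup.mem_zpowers_iff.mp hzzw
      rw [hzw.mul_zpow] at hk
      -- hk : z ^ k * w ^ k = z
      have hwk : w ^ k = z ^ (1 - k) := by
        have h1 : w ^ k = (z ^ k)⁻¹ * z := eq_inv_mul_iff_mul_eq.mpr hk
        rw [h1, zpow_sub, zpow_one]
        exact (((Commute.refl z).zpow_left k).inv_left.eq)
      have hBp : (w ^ k) ^ p = 1 := by
        have : orderOf (w ^ k) ∣ p :=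
          hwo ▸ orderOf_dvd_of_mem_zpowers (Subgroup.zpow_mem _ (mem_zpowers w) k)
        exact orderOf_dvd_iff_pow_eq_one.mp this
      have hzpow : z ^ ((1 - k) * (p : ℤ)) = 1 := by
        rw [zpow_mul, ← hwk, zpow_natCast, hBp]
      have hdvd : ((p : ℤ)) ^ 2 ∣ (1 - k) * p := by
        have h5 := orderOf_dvd_iff_zpow_eq_one.mpr hzpow
        rw [hzo] at h5
        exact_mod_cast h5
      have hpk : ((p : ℤ)) ∣ 1 - k := by
        obtain ⟨m', hm'⟩ := hdvd
        refine ⟨m', ?_⟩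
        have hp0 : (p : ℤ) ≠ 0 := by exact_mod_cast hp.pos.ne'
        have h6 : (1 - k) * p = ((p : ℤ) * m') * p := by rw [hm']; ring
        exact mul_right_cancel₀ hp0 h6
      obtain ⟨m', hm'⟩ := hpk
      have hwkw : w ^ k = w := by
        have hk' : k = 1 - (p : ℤ) * m' := by linarith [hm']
        rw [hk', zpow_sub, zpow_one, zpow_mul, zpow_natCast, hwp, one_zpow, inv_one, mul_one]
      have : w ∈ zpowers z := by
        rw [← hwkw, hwk]
        exact Subgroup.zpow_mem _ (mem_zpowers z) _
      exact hnot this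
    · have : z * w ∈ zpowers z := split_mem hp hq hpq ozw hzo hxo (hzc x) hor
      have : w ∈ zpowers z := by
        have hw : w = z⁻¹ * (z * w) := by group
        rw [hw]
        exact Subgroup.mul_mem _ (Subgroup.inv_mem _ (mem_zpowers z)) this
      exact hnot this
  have nuv : ¬ pgAdj (z ^ p) x := by
    apply not_pgAdj_of_orders <;> rw [hcp, hxo]
    · exact hp.coprime_iff_not_dvd.mp copPQ
    · exact hq.coprime_iff_not_dvd.mp copPQ.symm
  have hpq2 : p ^ 2 * q ≠ p := prime_dvd_ne hq hp (Ne.symm hpq) (dvd_mul_left _ _)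
  have hpq3 : p ^ 2 * q ≠ q := prime_dvd_ne hp hq hpq
    (dvd_mul_of_dvd_left (dvd_pow_self p two_ne_zero) _)
  refine c4_of h (a := z * x) (b := z * w * x) (u := z ^ p) (v := x)
    ?_ ?_ ?_ ?_ ?_ ?_ m1 m2 m3 m4 nab nuv
  · intro e; exact hpq2 (by rw [← oa, e, hcp])
  · intro e
    have hzzw : z = z * w := mul_right_cancel e
    have : w = 1 := (left_eq_mul.mp hzzw)
    rw [this, orderOf_one] at hwo
    exact hp.ne_one hwo.symm
  · intro e; exact hpq3 (by rw [← oa, e, hxo])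
  · intro e; exact hpq2 (by rw [← ob, ← e, hcp])
  · intro e; exact hpq (by rw [← hcp, e, hxo])
  · intro e; exact hpq3 (by rw [← ob, e, hxo])

end core2

section core3

open Subgroup

variable {G : Type*} [Group G] [Finite G]

/-- `z^p` lies in the cyclic subgroup generated by any nontrivial `p`-element
commuting with the `q`-element `x`. -/
lemma zp_mem (h : pgC4Free G) {p q : ℕ} (hp : p.Prime) (hq : q.Prime) (hpq : p ≠ q)
    {z x : G} (hzc : ∀ g, Commute z g) (hzo : orderOf z = p ^ 2) (hxo : orderOf x = q)
    {w : G} (cwx : Commute w x) (hw1 : w ≠ 1) {i : ℕ} (hwo : orderOf w = p ^ i) :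
    z ^ p ∈ zpowers w := by
  have hcp : orderOf (z ^ p) = p := by
    have := orderOf_pow_prime (g := z) hp.pos hzo (k := 1) one_le_two
    simpa using this
  have hi : 1 ≤ i := by
    rcases Nat.eq_zero_or_pos i with h0 | h0
    · rw [h0, pow_zero] at hwo
      exact absurd (orderOf_eq_one_iff.mp hwo) hw1
    · exact h0
  have hw1o : orderOf (w ^ p ^ (i - 1)) = p := by
    rw [orderOf_pow_prime hp.pos hwo (Nat.sub_le i 1), show i - (i - 1) = 1 by omega,
      pow_one]
  have cw1x : Commute (w ^ p ^ (i - 1)) x := cwx.pow_left _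
  have hw1z : w ^ p ^ (i - 1) ∈ zpowers z :=
    order_p_in_z h hp hq hpq hzc hzo hw1o hxo cw1x
  obtain ⟨k, hk⟩ := (Submonoid.mem_powers_iff _ _).mp (mem_powers_iff_mem_zpowers.mpr hw1z)
  -- hk : z ^ k = w ^ p ^ (i-1)
  have hordk : orderOf (z ^ k) = p := by rw [hk, hw1o]
  have hgcd : Nat.gcd (p ^ 2) k = p := by
    have h2 := orderOf_pow (x := z) (n := k)
    rw [hordk, hzo] at h2
    have hd : Nat.gcd (p ^ 2) k ∣ p ^ 2 := Nat.gcd_dvd_left _ _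
    have h3 := Nat.mul_div_cancel' hd
    rw [← h2] at h3
    exact Nat.eq_of_mul_eq_mul_right hp.pos (by rw [h3, pow_two])
  obtain ⟨m, hmk⟩ : p ∣ k := hgcd ▸ Nat.gcd_dvd_right (p ^ 2) k
  have hzpm : (z ^ p) ^ m = w ^ p ^ (i - 1) := by rw [← pow_mul, ← hmk, hk]
  have hcop : Nat.Coprime m p := by
    have h4 : orderOf ((z ^ p) ^ m) = p := by rw [hzpm, hw1o]
    have h5 := orderOf_pow (x := z ^ p) (n := m)
    rw [h4, hcp] at h5
    have hd : Nat.gcd p m ∣ p := Nat.gcd_dvd_left _ _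
    have h6 := Nat.mul_div_cancel' hd
    rw [← h5] at h6
    have h7 : Nat.gcd p m = 1 :=
      Nat.eq_of_mul_eq_mul_right hp.pos (by rw [h6, one_mul])
    rw [Nat.coprime_comm]
    exact h7
  have h8 : z ^ p ∈ zpowers ((z ^ p) ^ m) := memZpow (by rw [hcp]; exact hcop)
  rw [hzpm] at h8
  exact (zpowers_le.mpr (Subgroup.pow_mem _ (mem_zpowers w) _)) h8

/-- any two nontrivial `p`-elements commuting with the `q`-element `x`
generate comparable cyclic subgroups. -/
lemma chain (h : pgC4Free G) {p q : ℕ} (hp : p.Prime) (hq : q.Prime) (hpq : p ≠ q)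
    {z x : G} (hzc : ∀ g, Commute z g) (hzo : orderOf z = p ^ 2) (hxo : orderOf x = q)
    {w w' : G} (cwx : Commute w x) (cw'x : Commute w' x) (hw1 : w ≠ 1) (hw'1 : w' ≠ 1)
    {i j : ℕ} (hwo : orderOf w = p ^ i) (hw'o : orderOf w' = p ^ j) :
    w ∈ zpowers w' ∨ w' ∈ zpowers w := by
  by_contra hcon
  push_neg at hcon
  obtain ⟨h1, h2⟩ := hcon
  have copPQ : Nat.Coprime p q := (Nat.coprime_primes hp hq).mpr hpq
  have hcp : orderOf (z ^ p) = p := by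
    have := orderOf_pow_prime (g := z) hp.pos hzo (k := 1) one_le_two
    simpa using this
  have mc1 : z ^ p ∈ zpowers w := zp_mem h hp hq hpq hzc hzo hxo cwx hw1 hwo
  have mc2 : z ^ p ∈ zpowers w' := zp_mem h hp hq hpq hzc hzo hxo cw'x hw'1 hw'o
  have copa : Nat.Coprime (orderOf w) (orderOf x) := by
    rw [hwo, hxo]; exact copPQ.pow_left i
  have copb : Nat.Coprime (orderOf w') (orderOf x) := by
    rw [hw'o, hxo]; exact copPQ.pow_left j
  have m1 : x ∈ zpowers (w * x) := mem_zpowers_mul_right cwx copa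
  have m2 : x ∈ zpowers (w' * x) := mem_zpowers_mul_right cw'x copb
  have m3 : z ^ p ∈ zpowers (w * x) :=
    (zpowers_le.mpr (mem_zpowers_mul_left cwx copa)) mc1
  have m4 : z ^ p ∈ zpowers (w' * x) :=
    (zpowers_le.mpr (mem_zpowers_mul_left cw'x copb)) mc2
  have oa : orderOf (w * x) = p ^ i * q := by
    rw [cwx.orderOf_mul_eq_mul_orderOf_of_coprime copa, hwo, hxo]
  have ob : orderOf (w' * x) = p ^ j * q := by
    rw [cw'x.orderOf_mul_eq_mul_orderOf_of_coprime copb, hw'o, hxo]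
  have nab : ¬ pgAdj (w * x) (w' * x) := by
    rintro ⟨_, hor | hor⟩
    · exact h1 (split_mem hp hq hpq hwo hw'o hxo cw'x hor)
    · exact h2 (split_mem hp hq hpq hw'o hwo hxo cwx hor)
  have nuv : ¬ pgAdj x (z ^ p) := by
    apply not_pgAdj_of_orders <;> rw [hcp, hxo]
    · exact hq.coprime_iff_not_dvd.mp copPQ.symm
    · exact hp.coprime_iff_not_dvd.mp copPQ
  have haq : p ^ i * q ≠ p := prime_dvd_ne hq hp (Ne.symm hpq) (dvd_mul_left _ _)
  have hbq : p ^ j * q ≠ p := prime_dvd_ne hq hp (Ne.symm hpq) (dvd_mul_left _ _)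
  refine c4_of h (a := w * x) (b := w' * x) (u := x) (v := z ^ p)
    ?_ ?_ ?_ ?_ ?_ ?_ m1 m2 m3 m4 nab nuv
  · intro e
    have : w = 1 := by
      have := mul_right_cancel (a := w) (b := x) (c := 1) (by rw [one_mul]; exact e)
      exact this
    exact hw1 this
  · intro e
    exact h1 (mul_right_cancel e ▸ mem_zpowers w')
  · intro e; exact haq (by rw [← oa, e, hcp])
  · intro e
    have : w' = 1 := by
      have := mul_right_cancel (a := w') (b := x) (c := 1) (by rw [one_mul]; exact e.symm)
      exact this
    exact hw'1 this
  · intro e; exact hpq (by rw [← hcp, ← e, hxo])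
  · intro e; exact hbq (by rw [← ob, e, hcp])

/-- among the elements of a set of commuting-with-`x` `p`-elements there is one
generating all others. -/
lemma exists_gen (h : pgC4Free G) {p q : ℕ} (hp : p.Prime) (hq : q.Prime) (hpq : p ≠ q)
    {z x : G} (hzc : ∀ g, Commute z g) (hzo : orderOf z = p ^ 2) (hxo : orderOf x = q)
    (S : Set G) (hcomm : ∀ g ∈ S, Commute g x) (hpels : ∀ g ∈ S, ∃ i, orderOf g = p ^ i)
    (hne : S.Nonempty) :
    ∃ m ∈ S, ∀ g ∈ S, g ∈ zpowers m := by
  obtain ⟨m, hmS, hmax⟩ : ∃ m ∈ S, ∀ g ∈ S, orderOf m ≤ orderOf g → orderOf m = orderOf g := by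
    obtain ⟨m, hmS, hmax⟩ := Set.Finite.exists_maximalFor orderOf S (Set.toFinite S) hne
    exact ⟨m, hmS, fun g hg hle => le_antisymm hle (hmax hg hle)⟩
  refine ⟨m, hmS, fun g hg => ?_⟩
  rcases eq_or_ne g 1 with rfl | hg1
  · exact Subgroup.one_mem _
  have hm1 : m ≠ 1 := by
    intro e
    have h9 := hmax g hg (by rw [e, orderOf_one]; exact orderOf_pos g)
    rw [e, orderOf_one] at h9
    exact hg1 (orderOf_eq_one_iff.mp h9.symm)
  obtain ⟨i, hio⟩ := hpels g hg
  obtain ⟨j, hjo⟩ := hpels m hmS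
  rcases chain h hp hq hpq hzc hzo hxo (hcomm g hg) (hcomm m hmS) hg1 hm1 hio hjo with hc | hc
  · exact hc
  · have hle : orderOf m ∣ orderOf g := orderOf_dvd_of_mem_zpowers hc
    have heq : orderOf m = orderOf g := hmax g hg (Nat.le_of_dvd (orderOf_pos g) hle)
    obtain ⟨k, hk⟩ := (Submonoid.mem_powers_iff _ _).mp (mem_powers_iff_mem_zpowers.mpr hc)
    -- hk : g ^ k = m
    have hogk : orderOf (g ^ k) = orderOf g := by rw [hk, ← heq]
    have hgcd : Nat.gcd (orderOf g) k = 1 := by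
      have h5 := orderOf_pow (x := g) (n := k)
      rw [hogk] at h5
      have hd : Nat.gcd (orderOf g) k ∣ orderOf g := Nat.gcd_dvd_left _ _
      have h6 := Nat.mul_div_cancel' hd
      rw [← h5] at h6
      exact Nat.eq_of_mul_eq_mul_right (orderOf_pos g) (by rw [h6, one_mul])
    have h8 : g ∈ zpowers (g ^ k) := memZpow (by rw [Nat.coprime_comm]; exact hgcd)
    rw [hk] at h8
    exact h8

/-- no prime `s ∉ {p, q}` admits an element of order `s` commuting with `x`. -/
lemma third_prime (h : pgC4Free G) {p q s : ℕ} (hp : p.Prime) (hq : q.Prime)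
    (hs : s.Prime) (hpq : p ≠ q) (hps : p ≠ s) (hqs : q ≠ s)
    {z x t : G} (hzc : ∀ g, Commute z g) (hzo : orderOf z = p ^ 2)
    (hxo : orderOf x = q) (hto : orderOf t = s) (ctx : Commute x t) : False := by
  have copPQ : Nat.Coprime p q := (Nat.coprime_primes hp hq).mpr hpq
  have copPS : Nat.Coprime p s := (Nat.coprime_primes hp hs).mpr hps
  have copQS : Nat.Coprime q s := (Nat.coprime_primes hq hs).mpr hqs
  have hcp : orderOf (z ^ p) = p := by
    have := orderOf_pow_prime (g := z) hp.pos hzo (k := 1) one_le_two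
    simpa using this
  have copxt : Nat.Coprime (orderOf x) (orderOf t) := by rw [hxo, hto]; exact copQS
  have hoxt : orderOf (x * t) = q * s := by
    rw [ctx.orderOf_mul_eq_mul_orderOf_of_coprime copxt, hxo, hto]
  have cb : Commute (z ^ p) (x * t) := ((hzc x).mul_right (hzc t)).pow_left p
  have copb : Nat.Coprime (orderOf (z ^ p)) (orderOf (x * t)) := by
    rw [hcp, hoxt]; exact copPQ.mul_right copPS
  have ob : orderOf (z ^ p * (x * t)) = p * (q * s) := by
    rw [cb.orderOf_mul_eq_mul_orderOf_of_coprime copb, hcp, hoxt]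
  have copa : Nat.Coprime (orderOf z) (orderOf x) := by
    rw [hzo, hxo]; exact copPQ.pow_left 2
  have oa : orderOf (z * x) = p ^ 2 * q := by
    rw [(hzc x).orderOf_mul_eq_mul_orderOf_of_coprime copa, hzo, hxo]
  have m1 : z ^ p ∈ zpowers (z * x) :=
    Subgroup.pow_mem _ (mem_zpowers_mul_left (hzc x) copa) p
  have m2 : z ^ p ∈ zpowers (z ^ p * (x * t)) := mem_zpowers_mul_left cb copb
  have m3 : x ∈ zpowers (z * x) := mem_zpowers_mul_right (hzc x) copa
  have m4 : x ∈ zpowers (z ^ p * (x * t)) := by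
    have hxt : x * t ∈ zpowers (z ^ p * (x * t)) := mem_zpowers_mul_right cb copb
    exact (zpowers_le.mpr hxt) (mem_zpowers_mul_left ctx copxt)
  have hnd1 : ¬ (p ^ 2 * q ∣ p * (q * s)) := by
    intro hd
    have h2 : p ^ 2 ∣ p ^ 1 * (q * s) := by
      rw [pow_one]; exact (dvd_mul_right _ _).trans hd
    exact not_pp_dvd hp one_lt_two (copPQ.mul_right copPS) h2
  have hnd2 : ¬ (p * (q * s) ∣ p ^ 2 * q) := by
    intro hd
    have h2 : s ∣ p ^ 2 * q :=
      (dvd_mul_of_dvd_right (dvd_mul_left s q) p).trans hd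
    exact (hs.coprime_iff_not_dvd.mp
      (Nat.Coprime.mul_right (copPS.symm.pow_right 2) copQS.symm)) h2
  have nab : ¬ pgAdj (z * x) (z ^ p * (x * t)) := by
    apply not_pgAdj_of_orders <;> rw [oa, ob]
    · exact hnd1
    · exact hnd2
  have nuv : ¬ pgAdj (z ^ p) x := by
    apply not_pgAdj_of_orders <;> rw [hcp, hxo]
    · exact hp.coprime_iff_not_dvd.mp copPQ
    · exact hq.coprime_iff_not_dvd.mp copPQ.symm
  refine c4_of h (a := z * x) (b := z ^ p * (x * t)) (u := z ^ p) (v := x)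
    ?_ ?_ ?_ ?_ ?_ ?_ m1 m2 m3 m4 nab nuv
  · intro e
    exact prime_dvd_ne hq hp (Ne.symm hpq) (dvd_mul_left _ _) (by rw [← oa, e, hcp])
  · intro e; exact hnd1 (by rw [← oa, ← ob, e])
  · intro e
    exact prime_dvd_ne hp hq hpq (dvd_mul_of_dvd_left (dvd_pow_self p two_ne_zero) _)
      (by rw [← oa, e, hxo])
  · intro e
    have : p * (q * s) = p := by rw [← ob, ← e, hcp]
    exact prime_dvd_ne hs hp (Ne.symm hps)
      (dvd_mul_of_dvd_right (dvd_mul_left s q) p) this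
  · intro e; exact hpq (by rw [← hcp, e, hxo])
  · intro e
    have : p * (q * s) = q := by rw [← ob, e, hxo]
    exact prime_dvd_ne hs hq (Ne.symm hqs)
      (dvd_mul_of_dvd_right (dvd_mul_left s q) p) this

end core3

theorem structure_of_center_nonelementary_pgroup {G : Type*} [Group G] [Finite G]
    (h : pgC4Free G) (hG : ¬ IsPrimePow (Nat.card G))
    (p : ℕ) (hp : p.Prime) (hZ : IsPGroup p (Subgroup.center G))
    (z : G) (hz : z ∈ Subgroup.center G) (hzo : orderOf z = p ^ 2) :
    IsCyclic (Subgroup.center G) ∧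
    (∀ q : ℕ, q.Prime → q ≠ p → q ∣ Nat.card G →
        ∀ Q : Sylow q G, Monoid.exponent (Q : Subgroup G) = q) ∧
    (∀ q : ℕ, q.Prime → q ≠ p → ∀ x : G, x ≠ 1 → (∃ n : ℕ, orderOf x = q ^ n) →
        (∀ s : ℕ, s.Prime →
            (s ∣ Nat.card (Subgroup.centralizer ({x} : Set G)) ↔ s = p ∨ s = q)) ∧
        (∀ P : Sylow p (Subgroup.centralizer ({x} : Set G)),
            IsCyclic (P : Subgroup (Subgroup.centralizer ({x} : Set G))) ∧
            (P : Subgroup (Subgroup.centralizer ({x} : Set G))).Normal)) := by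
  haveI : Fact p.Prime := ⟨hp⟩
  have hzc : ∀ g : G, Commute z g := fun g => ((Subgroup.mem_center_iff.mp hz) g).symm
  have hp2 : 1 < p ^ 2 := one_lt_pow₀ hp.one_lt two_ne_zero
  have hz1 : z ≠ 1 := by
    intro e
    rw [e, orderOf_one] at hzo
    omega
  have hcard : 1 < Nat.card G := Finite.one_lt_card_iff_nontrivial.mpr ⟨z, 1, hz1⟩
  have hpdvd : p ∣ Nat.card G :=
    dvd_trans (dvd_pow_self p two_ne_zero) (hzo ▸ orderOf_dvd_natCard z)
  -- no element of order q^2 for q ≠ p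
  have noq2 : ∀ (q : ℕ), q.Prime → q ≠ p → ∀ y : G, orderOf y = q ^ 2 → False :=
    fun q hq hqp y hy => no_q_squared h hp hq (Ne.symm hqp) hzc hzo hy
  -- every nontrivial q-element has order exactly q
  have qorder : ∀ (q : ℕ), q.Prime → q ≠ p → ∀ y : G, y ≠ 1 →
      (∃ n, orderOf y = q ^ n) → orderOf y = q := by
    rintro q hq hqp y hy1 ⟨n, hn⟩
    match n, hn with
    | 0, hn => exact absurd (orderOf_eq_one_iff.mp (by simpa using hn)) hy1
    | 1, hn => simpa using hn
    | (m+2), hn =>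
      exfalso
      apply noq2 q hq hqp (y ^ q ^ m)
      rw [orderOf_pow_prime hq.pos hn (by omega : m ≤ m + 2),
        show m + 2 - m = 2 by omega]
  -- Part 1 : center is cyclic
  have part1 : IsCyclic (Subgroup.center G) := by
    obtain ⟨q0, hq0, hq0p, hq0d⟩ : ∃ q0, q0.Prime ∧ q0 ≠ p ∧ q0 ∣ Nat.card G := by
      by_contra hcon
      push_neg at hcon
      apply hG
      have hall : ∀ {d : ℕ}, d.Prime → d ∣ Nat.card G → d = p := by
        intro d hd hdd
        by_contra hne
        exact hcon d hd hne hdd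
      have heq := Nat.eq_prime_pow_of_unique_prime_dvd (by omega) hall
      refine ⟨p, (Nat.card G).primeFactorsList.length, hp.prime, ?_, heq.symm⟩
      rcases Nat.eq_zero_or_pos (Nat.card G).primeFactorsList.length with h0 | h0
      · rw [h0, pow_zero] at heq; omega
      · exact h0
    haveI : Fact q0.Prime := ⟨hq0⟩
    obtain ⟨x0, hx0⟩ := exists_prime_orderOf_dvd_card' q0 hq0d
    have hpq0 : p ≠ q0 := Ne.symm hq0p
    obtain ⟨m, hmZ, hgen⟩ := exists_gen h hp hq0 hpq0 hzc hzo hx0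
      (Subgroup.center G : Set G)
      (fun g hg => ((Subgroup.mem_center_iff.mp hg) x0).symm)
      (fun g hg => by
        obtain ⟨k, hk⟩ := hZ ⟨g, hg⟩
        have hk' : g ^ p ^ k = 1 := by
          have := congrArg (Subtype.val) hk
          push_cast at this
          simpa using this
        obtain ⟨i, _, hio⟩ := (Nat.dvd_prime_pow hp).mp (orderOf_dvd_of_pow_eq_one hk')
        exact ⟨i, hio⟩)
      ⟨z, hz⟩
    constructor
    refine ⟨⟨m, hmZ⟩, ?_⟩
    rintro ⟨g, hg⟩
    obtain ⟨k, hk⟩ := (Submonoid.mem_powers_iff _ _).mp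
      (mem_powers_iff_mem_zpowers.mpr (hgen g hg))
    refine ⟨(k : ℤ), ?_⟩
    show (⟨m, hmZ⟩ : Subgroup.center G) ^ (k : ℤ) = ⟨g, hg⟩
    apply Subtype.ext
    rw [zpow_natCast]
    push_cast
    exact hk
  refine ⟨part1, ?_, ?_⟩
  -- Part 2 : Sylow q-subgroups have exponent q
  · intro q hq hqp hqd Q
    haveI : Fact q.Prime := ⟨hq⟩
    have hord : ∀ g : (Q : Subgroup G), (g : G) ^ q = 1 := by
      intro g
      obtain ⟨k, hk⟩ := Q.isPGroup' g
      have hk' : (g : G) ^ q ^ k = 1 := by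
        have := congrArg (Subtype.val) hk
        push_cast at this
        simpa using this
      obtain ⟨i, _, hio⟩ := (Nat.dvd_prime_pow hq).mp (orderOf_dvd_of_pow_eq_one hk')
      rcases eq_or_ne (g : G) 1 with e | e
      · rw [e]; exact one_pow q
      · have hq' := qorder q hq hqp _ e ⟨i, hio⟩
        have h7 := pow_orderOf_eq_one (g : G)
        rwa [hq'] at h7
    apply Nat.dvd_antisymm
    · apply Monoid.exponent_dvd_of_forall_pow_eq_one
      intro g
      apply Subtype.ext
      push_cast
      exact hord g
    · have hqQ : q ∣ Nat.card (Q : Subgroup G) := by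
        rw [Q.card_eq_multiplicity]
        exact dvd_pow_self q
          (Nat.Prime.factorization_pos_of_dvd hq (by omega) hqd).ne'
      obtain ⟨g, hg⟩ := exists_prime_orderOf_dvd_card' q hqQ
      have := Monoid.order_dvd_exponent g
      rwa [hg] at this
  -- Part 3
  · intro q hq hqp x hx1 hxn
    haveI : Fact q.Prime := ⟨hq⟩
    have hpq : p ≠ q := Ne.symm hqp
    have hxo : orderOf x = q := qorder q hq hqp x hx1 hxn
    have hxC : x ∈ Subgroup.centralizer ({x} : Set G) := by
      rw [Subgroup.mem_centralizer_iff]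
      rintro y hy
      rw [Set.mem_singleton_iff] at hy
      rw [hy]
    have hzC : z ∈ Subgroup.centralizer ({x} : Set G) :=
      Subgroup.center_le_centralizer ({x} : Set G) hz
    have hcommC : ∀ g ∈ Subgroup.centralizer ({x} : Set G), Commute g x := fun g hg =>
      (Subgroup.mem_centralizer_iff.mp hg x (Set.mem_singleton x)).symm
    constructor
    · intro s hs
      constructor
      · intro hsd
        by_contra hcon
        push_neg at hcon
        obtain ⟨hsp, hsq⟩ := hcon
        haveI : Fact s.Prime := ⟨hs⟩
        obtain ⟨t, ht⟩ :=
          exists_prime_orderOf_dvd_card' (G := Subgroup.centralizer ({x} : Set G)) s hsd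
        have hto : orderOf (t : G) = s := by rw [Subgroup.orderOf_coe, ht]
        have hctx : Commute x (t : G) := (hcommC (t : G) t.2).symm
        exact third_prime h hp hq hs hpq (fun e => hsp e.symm) (fun e => hsq e.symm)
          hzc hzo hxo hto hctx
      · rintro (rfl | rfl)
        · have h9 : orderOf (⟨z, hzC⟩ : ↥(Subgroup.centralizer ({x} : Set G))) = s ^ 2 := by
            rw [Subgroup.orderOf_mk, hzo]
          have h10 := orderOf_dvd_natCard (⟨z, hzC⟩ : ↥(Subgroup.centralizer ({x} : Set G)))
          rw [h9] at h10
          exact dvd_trans (dvd_pow_self s two_ne_zero) h10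
        · have h9 : orderOf (⟨x, hxC⟩ : ↥(Subgroup.centralizer ({x} : Set G))) = s := by
            rw [Subgroup.orderOf_mk, hxo]
          have h10 := orderOf_dvd_natCard (⟨x, hxC⟩ : ↥(Subgroup.centralizer ({x} : Set G)))
          rw [h9] at h10
          exact h10
    · intro P
      obtain ⟨m, hmS, hgen⟩ := exists_gen h hp hq hpq hzc hzo hxo
        {g : G | g ∈ Subgroup.centralizer ({x} : Set G) ∧ ∃ i, orderOf g = p ^ i}
        (fun g hg => hcommC g hg.1) (fun g hg => hg.2) ⟨z, hzC, 2, hzo⟩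
      obtain ⟨hmC, I, hmo⟩ := hmS
      have claim : ∀ g : ↥(Subgroup.centralizer ({x} : Set G)), (∃ i, orderOf g = p ^ i) →
          g ∈ Subgroup.zpowers (⟨m, hmC⟩ : ↥(Subgroup.centralizer ({x} : Set G))) := by
        rintro g ⟨i, hi⟩
        have hgS : (g : G) ∈
            {g : G | g ∈ Subgroup.centralizer ({x} : Set G) ∧ ∃ i, orderOf g = p ^ i} :=
          ⟨g.2, i, by rw [Subgroup.orderOf_coe, hi]⟩
        obtain ⟨k, hk⟩ := (Submonoid.mem_powers_iff _ _).mp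
          (mem_powers_iff_mem_zpowers.mpr (hgen _ hgS))
        rw [Subgroup.mem_zpowers_iff]
        refine ⟨(k : ℤ), ?_⟩
        apply Subtype.ext
        rw [zpow_natCast]
        push_cast
        exact hk
      have hMp : IsPGroup p
          (Subgroup.zpowers (⟨m, hmC⟩ : ↥(Subgroup.centralizer ({x} : Set G)))) := by
        apply IsPGroup.of_card (n := I)
        rw [Nat.card_zpowers, Subgroup.orderOf_mk, hmo]
      obtain ⟨P0, hP0⟩ := hMp.exists_le_sylow
      have hle : ∀ (P' : Sylow p ↥(Subgroup.centralizer ({x} : Set G))),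
          (P' : Subgroup ↥(Subgroup.centralizer ({x} : Set G))) ≤
            Subgroup.zpowers (⟨m, hmC⟩ : ↥(Subgroup.centralizer ({x} : Set G))) := by
        intro P' g hg
        apply claim
        obtain ⟨k, hk⟩ := P'.isPGroup' ⟨g, hg⟩
        have hk' : g ^ p ^ k = 1 := by
          have := congrArg Subtype.val hk
          push_cast at this
          simpa using this
        obtain ⟨i, _, hio⟩ := (Nat.dvd_prime_pow hp).mp (orderOf_dvd_of_pow_eq_one hk')
        exact ⟨i, hio⟩
      have hP0eq : (P0 : Subgroup ↥(Subgroup.centralizer ({x} : Set G))) =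
          Subgroup.zpowers (⟨m, hmC⟩ : ↥(Subgroup.centralizer ({x} : Set G))) :=
        le_antisymm (hle P0) hP0
      have hPeq : (P : Subgroup ↥(Subgroup.centralizer ({x} : Set G))) =
          Subgroup.zpowers (⟨m, hmC⟩ : ↥(Subgroup.centralizer ({x} : Set G))) := by
        apply Subgroup.eq_of_le_of_card_ge (hle P)
        rw [← hP0eq, P.card_eq_multiplicity, P0.card_eq_multiplicity]
      constructor
      · rw [hPeq]
        constructor
        refine ⟨⟨⟨m, hmC⟩, Subgroup.mem_zpowers _⟩, ?_⟩
        rintro ⟨g, hg⟩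
        obtain ⟨k, hk⟩ := Subgroup.mem_zpowers_iff.mp hg
        refine ⟨k, ?_⟩
        apply Subtype.ext
        push_cast
        exact hk
      · rw [hPeq]
        constructor
        intro n hn gg
        apply claim
        have hsemi : SemiconjBy gg n (gg * n * gg⁻¹) := by
          unfold SemiconjBy
          group
        have horder : orderOf n = orderOf (gg * n * gg⁻¹) := hsemi.orderOf_eq
        have hnd : orderOf n ∣ p ^ I := by
          have h11 : orderOf n ∣
              orderOf (⟨m, hmC⟩ : ↥(Subgroup.centralizer ({x} : Set G))) :=
            orderOf_dvd_of_mem_zpowers hn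
          have h12 : orderOf (⟨m, hmC⟩ : ↥(Subgroup.centralizer ({x} : Set G))) = p ^ I := by
            rw [Subgroup.orderOf_mk, hmo]
          rwa [h12] at h11
        rw [horder] at hnd
        obtain ⟨i, _, hio⟩ := (Nat.dvd_prime_pow hp).mp hnd
        exact ⟨i, hio⟩
end

section
/- Let G be a finite group whose power graph P(G) is C_4-free, suppose |G| is not a prime power, suppose the center Z(G) is a p-group (p prime) containing an element of order p^2, let q ≠ p be a prime, and let x ∈ G be a nontrivial q-element. If ⟨y⟩ denotes the (cyclic, normal) Sylow p-subgroup of C_G(x), then the index [C_G(x) : C_{C_G(x)}(y)] is either 1 or q; in particular, if p = 2 then C_G(x) = ⟨y⟩ × S where S is the Sylow q-subgroup of C_G(x). -/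
section Aux

variable {H : Type*} [Group H]

lemma pg_ne_of_orderOf_ne {a b : H} (h : orderOf a ≠ orderOf b) : a ≠ b := by
  intro e; exact h (by rw [e])

/-- CRT: in a finite group, if `a b` commute and have coprime orders then
`a` is a power of `a*b`. -/
lemma pg_crt_left [Finite H] {a b : H} (hc : Commute a b)
    (hco : Nat.Coprime (orderOf a) (orderOf b)) : a ∈ Subgroup.zpowers (a * b) := by
  obtain ⟨k, hk1, hk2⟩ := Nat.chineseRemainder hco 1 0
  refine ⟨(k : ℤ), ?_⟩
  show (a*b) ^ (k:ℤ) = a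
  rw [zpow_natCast, hc.mul_pow]
  have h1 : a ^ k = a ^ 1 := pow_eq_pow_iff_modEq.mpr hk1
  have h2 : b ^ k = b ^ 0 := pow_eq_pow_iff_modEq.mpr hk2
  rw [h1, h2, pow_one, pow_zero, mul_one]

lemma pg_crt_right [Finite H] {a b : H} (hc : Commute a b)
    (hco : Nat.Coprime (orderOf a) (orderOf b)) : b ∈ Subgroup.zpowers (a * b) := by
  have := pg_crt_left hc.symm hco.symm
  rwa [← hc.eq] at this

/-- Subgroup equality from inclusion plus cardinality. -/
lemma pg_zpowers_eq_of_le_of_card {a b : H} [Finite H] (h : Subgroup.zpowers a ≤ Subgroup.zpowers b)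
    (hcard : orderOf b ≤ orderOf a) : Subgroup.zpowers a = Subgroup.zpowers b := by
  have h1 : Nat.card (Subgroup.zpowers b) ≤ Nat.card (Subgroup.zpowers a) := by
    rwa [Nat.card_zpowers, Nat.card_zpowers]
  have h2 : ((Subgroup.zpowers a : Subgroup H) : Set H) = ((Subgroup.zpowers b : Subgroup H) : Set H) := by
    exact Set.eq_of_subset_of_ncard_le h
      (by rwa [← Nat.card_coe_set_eq, ← Nat.card_coe_set_eq]) (Set.toFinite _)
  exact SetLike.ext' h2

/-- If `orderOf w = m * q`, `a ∈ ⟨w⟩` and `a ^ m = 1` then `a ∈ ⟨w ^ q⟩`. -/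
lemma pg_mem_zpowers_pow [Finite H] {w a : H} {m q : ℕ}
    (hw : orderOf w = m * q) (hmem : a ∈ Subgroup.zpowers w) (ha : a ^ m = 1) :
    a ∈ Subgroup.zpowers (w ^ q) := by
  have hm : 0 < m := by
    have := orderOf_pos w
    rw [hw] at this
    exact Nat.pos_of_ne_zero (fun e => by simp [e] at this)
  obtain ⟨n, hn⟩ := (Submonoid.mem_powers_iff _ _).mp
    ((mem_powers_iff_mem_zpowers).mpr hmem)
  have hdvd : orderOf w ∣ n * m := by
    apply orderOf_dvd_of_pow_eq_one
    rw [mul_comm n m, pow_mul', hn, ha]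
  rw [hw, mul_comm n m] at hdvd
  have hq : q ∣ n := (Nat.mul_dvd_mul_iff_left hm).mp hdvd
  obtain ⟨t, ht⟩ := hq
  refine ⟨(t : ℤ), ?_⟩
  show (w ^ q) ^ (t:ℤ) = a
  rw [zpow_natCast, ← pow_mul, ← ht, hn]

end Aux

section Chunk2

variable {H : Type*} [Group H]

/-- Key combinatorial lemma: an element of order `p² * q * s` (p, q distinct primes,
s coprime to p, s ≠ 1) yields an induced C4 in the power graph. -/
lemma pg_cyc_c4 [Finite H] {p q s : ℕ} (hp : p.Prime) (hq : q.Prime) (hpq : p ≠ q)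
    (hs : Nat.Coprime s p) (hs1 : s ≠ 1) (hs0 : s ≠ 0)
    {w : H} (hw : orderOf w = p ^ 2 * q * s) : pgHasInducedC4 H := by
  have hp1 := hp.one_lt
  have hq1 := hq.one_lt
  have hs2 : 2 ≤ s := by omega
  have hqs : ¬ p ∣ s := fun hd => by
    have := hs.symm.eq_one_of_dvd hd; omega
  have hps : ¬ s ∣ p := fun hd => hs1 (hs.eq_one_of_dvd hd)
  refine ⟨w ^ p, w ^ (p ^ 2 * s), w ^ s, w ^ (p * q * s), ?_⟩
  have oa : orderOf (w ^ p) = p * q * s := by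
    rw [orderOf_pow, hw]
    have h1 : Nat.gcd (p ^ 2 * q * s) p = p := Nat.gcd_eq_right ⟨p * q * s, by ring⟩
    rw [h1]
    have h2 : p ^ 2 * q * s = p * (p * q * s) := by ring
    rw [h2, Nat.mul_div_cancel_left _ (by omega)]
  have ob : orderOf (w ^ (p ^ 2 * s)) = q := by
    rw [orderOf_pow, hw]
    have h1 : Nat.gcd (p ^ 2 * q * s) (p ^ 2 * s) = p ^ 2 * s :=
      Nat.gcd_eq_right ⟨q, by ring⟩
    rw [h1]
    have h2 : p ^ 2 * q * s = (p ^ 2 * s) * q := by ring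
    rw [h2, Nat.mul_div_cancel_left _ (by positivity)]
  have oc : orderOf (w ^ s) = p ^ 2 * q := by
    rw [orderOf_pow, hw]
    have h1 : Nat.gcd (p ^ 2 * q * s) s = s := Nat.gcd_eq_right ⟨p ^ 2 * q, by ring⟩
    rw [h1]
    have h2 : p ^ 2 * q * s = s * (p ^ 2 * q) := by ring
    rw [h2, Nat.mul_div_cancel_left _ (by omega)]
  have od : orderOf (w ^ (p * q * s)) = p := by
    rw [orderOf_pow, hw]
    have h1 : Nat.gcd (p ^ 2 * q * s) (p * q * s) = p * q * s :=
      Nat.gcd_eq_right ⟨p, by ring⟩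
    rw [h1]
    have h2 : p ^ 2 * q * s = (p * q * s) * p := by ring
    rw [h2, Nat.mul_div_cancel_left _ (by positivity)]
  have hps4 : 4 ≤ p * s := Nat.mul_le_mul hp1 hs2
  have d_ab : w ^ p ≠ w ^ (p ^ 2 * s) := pg_ne_of_orderOf_ne (by
    rw [oa, ob]; intro e
    have h4 : 4 * q ≤ (p * s) * q := Nat.mul_le_mul hps4 le_rfl
    have h5 : (p * s) * q = q := by
      calc (p * s) * q = p * q * s := by ring
        _ = q := e
    omega)
  have d_ac : w ^ p ≠ w ^ s := pg_ne_of_orderOf_ne (by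
    rw [oa, oc]; intro e
    have h2 : (p * q) * s = (p * q) * p := by
      calc (p * q) * s = p * q * s := by ring
        _ = p ^ 2 * q := e
        _ = (p * q) * p := by ring
    have h3 : s = p := Nat.eq_of_mul_eq_mul_left (by positivity) h2
    exact hps (h3 ▸ dvd_refl s))
  have d_ad : w ^ p ≠ w ^ (p * q * s) := pg_ne_of_orderOf_ne (by
    rw [oa, od]; intro e
    have h4 : 4 ≤ q * s := Nat.mul_le_mul hq1 hs2
    have h5 : p * 4 ≤ p * (q * s) := Nat.mul_le_mul le_rfl h4
    have h6 : p * (q * s) = p := by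
      calc p * (q * s) = p * q * s := by ring
        _ = p := e
    omega)
  have d_bc : w ^ (p ^ 2 * s) ≠ w ^ s := pg_ne_of_orderOf_ne (by
    rw [ob, oc]; intro e
    have h4 : 4 ≤ p * p := Nat.mul_le_mul hp1 hp1
    have h5 : (p * p) * q = q := by
      calc (p * p) * q = p ^ 2 * q := by ring
        _ = q := e.symm
    have h6 : 4 * q ≤ (p * p) * q := Nat.mul_le_mul h4 le_rfl
    omega)
  have d_bd : w ^ (p ^ 2 * s) ≠ w ^ (p * q * s) := pg_ne_of_orderOf_ne (by
    rw [ob, od]; intro e; exact hpq e.symm)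
  have d_cd : w ^ s ≠ w ^ (p * q * s) := pg_ne_of_orderOf_ne (by
    rw [oc, od]; intro e
    have h2 : p * (p * q) = p * 1 := by
      calc p * (p * q) = p ^ 2 * q := by ring
        _ = p := e
        _ = p * 1 := by ring
    have h3 : p * q = 1 := Nat.eq_of_mul_eq_mul_left (by omega) h2
    have h4 : p ≤ p * q := Nat.le_mul_of_pos_right p (by omega)
    omega)
  refine ⟨d_ab, d_ac, d_ad, d_bc, d_bd, d_cd, ?_, ?_, ?_, ?_, ?_, ?_⟩
  · refine ⟨d_ab, Or.inr ⟨((p * s : ℕ) : ℤ), ?_⟩⟩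
    show (w ^ p) ^ ((p * s : ℕ) : ℤ) = w ^ (p ^ 2 * s)
    rw [zpow_natCast, ← pow_mul]; congr 1; ring
  · refine ⟨d_bc, Or.inl ⟨((p ^ 2 : ℕ) : ℤ), ?_⟩⟩
    show (w ^ s) ^ ((p ^ 2 : ℕ) : ℤ) = w ^ (p ^ 2 * s)
    rw [zpow_natCast, ← pow_mul]; congr 1; ring
  · refine ⟨d_cd, Or.inr ⟨((p * q : ℕ) : ℤ), ?_⟩⟩
    show (w ^ s) ^ ((p * q : ℕ) : ℤ) = w ^ (p * q * s)
    rw [zpow_natCast, ← pow_mul]; congr 1; ring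
  · refine ⟨d_ad.symm, Or.inl ⟨((q * s : ℕ) : ℤ), ?_⟩⟩
    show (w ^ p) ^ ((q * s : ℕ) : ℤ) = w ^ (p * q * s)
    rw [zpow_natCast, ← pow_mul]; congr 1; ring
  · rintro ⟨-, hmem | hmem⟩
    · have hd := orderOf_dvd_of_mem_zpowers hmem
      rw [oa, oc] at hd
      have hd' : (p * q) * s ∣ (p * q) * p := by
        have e : p ^ 2 * q = (p * q) * p := by ring
        rw [← e]; exact hd
      exact hps ((Nat.mul_dvd_mul_iff_left (show 0 < p * q by positivity)).mp hd')
    · have hd := orderOf_dvd_of_mem_zpowers hmem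
      rw [oa, oc] at hd
      have hd' : (p * q) * p ∣ (p * q) * s := by
        have e : p ^ 2 * q = (p * q) * p := by ring
        rw [← e]; exact hd
      exact hqs ((Nat.mul_dvd_mul_iff_left (show 0 < p * q by positivity)).mp hd')
  · rintro ⟨-, hmem | hmem⟩
    · have hd := orderOf_dvd_of_mem_zpowers hmem
      rw [ob, od] at hd
      exact hpq ((Nat.prime_dvd_prime_iff_eq hq hp).mp hd).symm
    · have hd := orderOf_dvd_of_mem_zpowers hmem
      rw [ob, od] at hd
      exact hpq ((Nat.prime_dvd_prime_iff_eq hp hq).mp hd)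

/-- C4-freeness passes to subgroups. -/
lemma pgC4Free.subgroup {G : Type*} [Group G] (h : pgC4Free G) (K : Subgroup G) :
    pgC4Free K := by
  intro ⟨x, u, y, v, h1, h2, h3, h4, h5, h6, a1, a2, a3, a4, n1, n2⟩
  have coeAdj : ∀ a b : K, pgAdj a b ↔ pgAdj (a : G) (b : G) := by
    intro a b
    have mem : ∀ a b : K, a ∈ Subgroup.zpowers b ↔ (a : G) ∈ Subgroup.zpowers (b : G) := by
      intro a b
      constructor
      · rintro ⟨k, rfl⟩; exact ⟨k, by push_cast; rfl⟩
      · rintro ⟨k, hk⟩; exact ⟨k, by apply Subtype.ext; push_cast; exact hk⟩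
    constructor
    · rintro ⟨hne, hor | hor⟩
      exacts [⟨Subtype.coe_ne_coe.mpr hne, Or.inl ((mem _ _).mp hor)⟩,
              ⟨Subtype.coe_ne_coe.mpr hne, Or.inr ((mem _ _).mp hor)⟩]
    · rintro ⟨hne, hor | hor⟩
      exacts [⟨Subtype.coe_ne_coe.mp hne, Or.inl ((mem _ _).mpr hor)⟩,
              ⟨Subtype.coe_ne_coe.mp hne, Or.inr ((mem _ _).mpr hor)⟩]
  exact h ⟨x, u, y, v, Subtype.coe_ne_coe.mpr h1, Subtype.coe_ne_coe.mpr h2,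
    Subtype.coe_ne_coe.mpr h3, Subtype.coe_ne_coe.mpr h4, Subtype.coe_ne_coe.mpr h5,
    Subtype.coe_ne_coe.mpr h6,
    (coeAdj _ _).mp a1, (coeAdj _ _).mp a2, (coeAdj _ _).mp a3, (coeAdj _ _).mp a4,
    fun c => n1 ((coeAdj _ _).mpr c), fun c => n2 ((coeAdj _ _).mpr c)⟩

end Chunk2
section Chunk3

variable {H : Type*} [Group H] [Finite H]

/-- Any element of prime-power order lies in a normal Sylow subgroup for that prime. -/
lemma pg_mem_sylow_of_normal {p : ℕ} [Fact p.Prime] (P : Sylow p H)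
    (hn : (P : Subgroup H).Normal) {a : H} {m : ℕ} (ha : orderOf a = p ^ m) :
    a ∈ (P : Subgroup H) := by
  have hpg : IsPGroup p (Subgroup.zpowers a) :=
    IsPGroup.of_card (by rw [Nat.card_zpowers, ha])
  obtain ⟨R, hR⟩ := hpg.exists_le_sylow
  obtain ⟨g, hg⟩ := MulAction.exists_smul_eq H R P
  haveI : P.Normal := hn
  have h2 : R = P := by
    have h3 : g⁻¹ • (g • R) = g⁻¹ • P := by rw [hg]
    rw [inv_smul_smul, Sylow.smul_eq_of_normal] at h3
    exact h3
  exact h2 ▸ hR (Subgroup.mem_zpowers a)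

/-- In a C4-free group with a central element of order p², q-elements (q ≠ p prime)
have order dividing q. -/
lemma pg_q_order (hC4 : pgC4Free H) {p q : ℕ}
    (hp : p.Prime) (hq : q.Prime) (hqp : q ≠ p) {z : H} (hz : z ∈ Subgroup.center H)
    (hzo : orderOf z = p ^ 2) {g : H} {n : ℕ} (hg : orderOf g = q ^ n) :
    orderOf g ∣ q := by
  rcases Nat.lt_or_ge n 2 with hn | hn
  · interval_cases n
    · rw [hg, pow_zero]; exact one_dvd q
    · rw [hg, pow_one]
  · exfalso
    set g' := g ^ (q ^ (n - 2)) with hg'def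
    have hg' : orderOf g' = q ^ 2 := by
      rw [hg'def, orderOf_pow, hg]
      have h1 : Nat.gcd (q ^ n) (q ^ (n - 2)) = q ^ (n - 2) :=
        Nat.gcd_eq_right (pow_dvd_pow q (by omega))
      rw [h1, Nat.pow_div (by omega) hq.pos]
      congr 1
      omega
    have hc : Commute z g' := ((Subgroup.mem_center_iff.mp hz) g').symm
    have hco : Nat.Coprime (orderOf z) (orderOf g') := by
      rw [hzo, hg']
      exact Nat.Coprime.pow _ _ ((Nat.coprime_primes hp hq).mpr (Ne.symm hqp))
    have hw : orderOf (z * g') = p ^ 2 * q * q := by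
      rw [hc.orderOf_mul_eq_mul_orderOf_of_coprime hco, hzo, hg']; ring
    exact hC4 (pg_cyc_c4 hp hq (Ne.symm hqp)
      ((Nat.coprime_primes hq hp).mpr hqp) hq.ne_one hq.pos.ne' hw)

/-- In a C4-free group with central elements of order p² and q, every prime dividing
an element order is p or q. -/
lemma pg_two_primes (hC4 : pgC4Free H) {p q : ℕ}
    (hp : p.Prime) (hq : q.Prime) (hqp : q ≠ p) {z x : H} (hz : z ∈ Subgroup.center H)
    (hzo : orderOf z = p ^ 2) (hx : x ∈ Subgroup.center H) (hxo : orderOf x = q)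
    (g : H) {r : ℕ} (hr : r.Prime) (hrd : r ∣ orderOf g) : r = p ∨ r = q := by
  by_contra hcon
  push_neg at hcon
  obtain ⟨hrp, hrq⟩ := hcon
  have hgpos : orderOf g ≠ 0 := (orderOf_pos g).ne'
  set a := g ^ (orderOf g / r) with hadef
  have hoa : orderOf a = r := by
    rw [hadef, orderOf_pow]
    have h1 : Nat.gcd (orderOf g) (orderOf g / r) = orderOf g / r :=
      Nat.gcd_eq_right (Nat.div_dvd_of_dvd hrd)
    rw [h1, Nat.div_div_self hrd hgpos]
  have hxa : Commute x a := ((Subgroup.mem_center_iff.mp hx) a).symm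
  have hoxa : orderOf (x * a) = q * r := by
    rw [hxa.orderOf_mul_eq_mul_orderOf_of_coprime, hxo, hoa]
    rw [hxo, hoa]
    exact (Nat.coprime_primes hq hr).mpr (fun e => hrq e.symm)
  have hzxa : Commute z (x * a) := ((Subgroup.mem_center_iff.mp hz) (x * a)).symm
  have hw : orderOf (z * (x * a)) = p ^ 2 * q * r := by
    rw [hzxa.orderOf_mul_eq_mul_orderOf_of_coprime, hzo, hoxa, mul_assoc]
    rw [hzo, hoxa]
    refine Nat.Coprime.pow_left ?_ ?_
    exact (Nat.Coprime.mul_right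
      ((Nat.coprime_primes hp hq).mpr (fun e => hqp e.symm))
      ((Nat.coprime_primes hp hr).mpr (fun e => hrp e.symm)))
  exact hC4 (pg_cyc_c4 hp hq (fun e => hqp e.symm)
    ((Nat.coprime_primes hr hp).mpr hrp) hr.ne_one hr.pos.ne' hw)

end Chunk3
section HomBuild

/-- Build the conjugation character as a monoid hom to `ZMod N`. -/
lemma pg_build_hom {H : Type*} [Group H] (y : H) (N : ℕ) (e : H → ℤ)
    (he : ∀ g, y ^ (e g) = g * y * g⁻¹)
    (hzmod : ∀ a b : ℤ, ((a : ZMod N) = (b : ZMod N)) ↔ y ^ a = y ^ b) :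
    ∃ φ₀ : H →* ZMod N, ∀ g, φ₀ g = ((e g : ℤ) : ZMod N) := by
  refine ⟨{ toFun := fun g => ((e g : ℤ) : ZMod N), map_one' := ?_, map_mul' := ?_ }, fun g => rfl⟩
  · have h1 : y ^ (e 1) = y ^ (1 : ℤ) := by rw [he 1]; simp
    have h2 := (hzmod (e 1) 1).mpr h1
    simpa using h2
  · intro a b
    have h1 : y ^ e (a * b) = y ^ (e a * e b) := by
      rw [he (a * b)]
      calc a * b * y * (a * b)⁻¹ = a * (b * y * b⁻¹) * a⁻¹ := by group
        _ = a * y ^ (e b) * a⁻¹ := by rw [he b]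
        _ = (a * y * a⁻¹) ^ (e b) := by rw [conj_zpow]
        _ = (y ^ (e a)) ^ (e b) := by rw [he a]
        _ = y ^ (e a * e b) := by rw [← zpow_mul]
    have h2 := (hzmod _ _).mpr h1
    show ((e (a * b) : ℤ) : ZMod N) = ((e a : ℤ) : ZMod N) * ((e b : ℤ) : ZMod N)
    rw [h2]
    push_cast
    ring

end HomBuild
section Main

lemma pg_main {H : Type*} [Group H] [Finite H] (hC4 : pgC4Free H)
    {p q : ℕ} (hp : p.Prime) (hq : q.Prime) (hqp : q ≠ p)
    {z x : H} (hz : z ∈ Subgroup.center H) (hzo : orderOf z = p ^ 2)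
    (hx : x ∈ Subgroup.center H) (hxo : orderOf x = q)
    (P : Sylow p H) (y : H) (hy : (P : Subgroup H) = Subgroup.zpowers y) :
    ((Subgroup.centralizer {y}).index = 1 ∨ (Subgroup.centralizer {y}).index = q) ∧
    (p = 2 → ∀ S : Sylow q H,
      Subgroup.zpowers y ⊓ (S : Subgroup H) = ⊥ ∧
      Subgroup.zpowers y ⊔ (S : Subgroup H) = ⊤ ∧
      ∀ a ∈ Subgroup.zpowers y, ∀ b ∈ (S : Subgroup H), Commute a b) := by
  haveI := Fact.mk hp
  haveI := Fact.mk hq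
  have hpq : p ≠ q := Ne.symm hqp
  have hyP : y ∈ (P : Subgroup H) := by rw [hy]; exact Subgroup.mem_zpowers y
  obtain ⟨k, hk⟩ := IsPGroup.iff_orderOf.mp P.2 (⟨y, hyP⟩ : (P : Subgroup H))
  have hyo : orderOf y = p ^ k := (Subgroup.orderOf_mk y hyP).symm.trans hk
  -- z lies in every Sylow p-subgroup
  have hzsyl : ∀ R : Sylow p H, z ∈ (R : Subgroup H) := by
    intro R
    have hzp : IsPGroup p (Subgroup.zpowers z) :=
      IsPGroup.of_card (by rw [Nat.card_zpowers, hzo])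
    have h1 := hzp.inf_normalizer_sylow R
    have h2 : z ∈ Subgroup.zpowers z ⊓ Subgroup.normalizer (R : Set H) :=
      ⟨Subgroup.mem_zpowers z, Subgroup.center_le_normalizer _ hz⟩
    rw [h1] at h2
    exact h2.2
  have hzy : z ∈ Subgroup.zpowers y := by rw [← hy]; exact hzsyl P
  have hk2 : 2 ≤ k := by
    have hdvd : p ^ 2 ∣ p ^ k := by
      rw [← hzo, ← hyo]; exact orderOf_dvd_of_mem_zpowers hzy
    exact (Nat.pow_dvd_pow_iff_le_right hp.one_lt).mp hdvd
  have hcyx : Commute y x := (Subgroup.mem_center_iff.mp hx y)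
  have hcopk : Nat.Coprime (orderOf y) (orderOf x) := by
    rw [hyo, hxo]; exact Nat.Coprime.pow_left _ ((Nat.coprime_primes hp hq).mpr hpq)
  have how : orderOf (y * x) = p ^ k * q := by
    rw [hcyx.orderOf_mul_eq_mul_orderOf_of_coprime hcopk, hyo, hxo]
  -- conjugates of y stay in ⟨y⟩  (via C4-freeness)
  have hnorm : ∀ g : H, g * y * g⁻¹ ∈ Subgroup.zpowers y := by
    intro g
    have hoy' : orderOf (g * y * g⁻¹) = p ^ k := by
      have h := orderOf_injective (MulAut.conj g).toMonoidHom (MulAut.conj g).injective y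
      simp only [MulEquiv.coe_toMonoidHom, MulAut.conj_apply] at h
      rw [h, hyo]
    have hcy'x : Commute (g * y * g⁻¹) x := (Subgroup.mem_center_iff.mp hx _)
    have hcopk' : Nat.Coprime (orderOf (g * y * g⁻¹)) (orderOf x) := by
      rw [hoy', hxo]; exact Nat.Coprime.pow_left _ ((Nat.coprime_primes hp hq).mpr hpq)
    have how' : orderOf (g * y * g⁻¹ * x) = p ^ k * q := by
      rw [hcy'x.orderOf_mul_eq_mul_orderOf_of_coprime hcopk', hoy', hxo]
    have hzy' : z ∈ Subgroup.zpowers (g * y * g⁻¹) := by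
      obtain ⟨m, hm⟩ := hzy
      exact ⟨m, by
        show (g * y * g⁻¹) ^ m = z
        rw [conj_zpow]
        show g * ((fun j : ℤ => y ^ j) m) * g⁻¹ = z
        rw [hm, Subgroup.mem_center_iff.mp hz g, mul_inv_cancel_right]⟩
    have hdico : g * y * g⁻¹ * x ∈ Subgroup.zpowers (y * x) ∨
        y * x ∈ Subgroup.zpowers (g * y * g⁻¹ * x) := by
      by_contra hno
      push_neg at hno
      obtain ⟨h1, h2⟩ := hno
      have d1 : y * x ≠ z := pg_ne_of_orderOf_ne (by
        rw [how, hzo]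
        intro ee
        have hqd : q ∣ p ^ 2 := ee ▸ dvd_mul_left q (p ^ k)
        exact hqp ((Nat.prime_dvd_prime_iff_eq hq hp).mp (hq.dvd_of_dvd_pow hqd)))
      have d2 : y * x ≠ g * y * g⁻¹ * x := fun ee =>
        h1 (by rw [← ee]; exact Subgroup.mem_zpowers _)
      have d3 : y * x ≠ x := pg_ne_of_orderOf_ne (by
        rw [how, hxo]
        intro ee
        have h3 : p ^ k * q = 1 * q := by rw [ee, one_mul]
        have h4 : p ^ k = 1 := Nat.eq_of_mul_eq_mul_right hq.pos h3
        have h5 : 1 < p ^ k := Nat.one_lt_pow (by omega) hp.one_lt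
        omega)
      have d4 : z ≠ g * y * g⁻¹ * x := pg_ne_of_orderOf_ne (by
        rw [how', hzo]
        intro ee
        have hqd : q ∣ p ^ 2 := ee.symm ▸ dvd_mul_left q (p ^ k)
        exact hqp ((Nat.prime_dvd_prime_iff_eq hq hp).mp (hq.dvd_of_dvd_pow hqd)))
      have d5 : z ≠ x := pg_ne_of_orderOf_ne (by
        rw [hzo, hxo]
        intro ee
        have hpd : p ∣ q := ee ▸ dvd_pow_self p (two_ne_zero)
        exact hpq ((Nat.prime_dvd_prime_iff_eq hp hq).mp hpd))
      have d6 : g * y * g⁻¹ * x ≠ x := pg_ne_of_orderOf_ne (by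
        rw [how', hxo]
        intro ee
        have h3 : p ^ k * q = 1 * q := by rw [ee, one_mul]
        have h4 : p ^ k = 1 := Nat.eq_of_mul_eq_mul_right hq.pos h3
        have h5 : 1 < p ^ k := Nat.one_lt_pow (by omega) hp.one_lt
        omega)
      refine hC4 ⟨y * x, z, g * y * g⁻¹ * x, x, d1, d2, d3, d4, d5, d6, ?_, ?_, ?_, ?_, ?_, ?_⟩
      · exact ⟨d1, Or.inr (Subgroup.zpowers_le.mpr (pg_crt_left hcyx hcopk) hzy)⟩
      · exact ⟨d4, Or.inl (Subgroup.zpowers_le.mpr (pg_crt_left hcy'x hcopk') hzy')⟩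
      · exact ⟨d6, Or.inr (pg_crt_right hcy'x hcopk')⟩
      · exact ⟨d3.symm, Or.inl (pg_crt_right hcyx hcopk)⟩
      · rintro ⟨-, hh | hh⟩
        exacts [h2 hh, h1 hh]
      · rintro ⟨-, hh | hh⟩
        · have := orderOf_dvd_of_mem_zpowers hh
          rw [hzo, hxo] at this
          have hpd : p ∣ q := dvd_trans (dvd_pow_self p two_ne_zero) this
          exact hpq ((Nat.prime_dvd_prime_iff_eq hp hq).mp hpd)
        · have := orderOf_dvd_of_mem_zpowers hh
          rw [hzo, hxo] at this
          have hqd : q ∣ p ^ 2 := this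
          exact hqp ((Nat.prime_dvd_prime_iff_eq hq hp).mp (hq.dvd_of_dvd_pow hqd))
    have hy'pow : (g * y * g⁻¹) ^ p ^ k = 1 := by
      rw [← hoy']; exact pow_orderOf_eq_one _
    have hypow : y ^ p ^ k = 1 := by rw [← hyo]; exact pow_orderOf_eq_one y
    rcases hdico with hmem | hmem
    · -- y' x ∈ ⟨y x⟩
      have hxw : x ∈ Subgroup.zpowers (y * x) := pg_crt_right hcyx hcopk
      have hyw : y ∈ Subgroup.zpowers (y * x) := pg_crt_left hcyx hcopk
      have hy'w : g * y * g⁻¹ ∈ Subgroup.zpowers (y * x) := by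
        have h3 := mul_mem hmem (inv_mem hxw)
        rwa [mul_inv_cancel_right] at h3
      have h4 : g * y * g⁻¹ ∈ Subgroup.zpowers ((y * x) ^ q) :=
        pg_mem_zpowers_pow how hy'w hy'pow
      have h5 : y ∈ Subgroup.zpowers ((y * x) ^ q) :=
        pg_mem_zpowers_pow how hyw hypow
      have howq : orderOf ((y * x) ^ q) = p ^ k := by
        rw [orderOf_pow, how, Nat.gcd_eq_right (dvd_mul_left q (p ^ k)),
          Nat.mul_div_cancel _ hq.pos]
      have heq : Subgroup.zpowers y = Subgroup.zpowers ((y * x) ^ q) :=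
        pg_zpowers_eq_of_le_of_card (Subgroup.zpowers_le.mpr h5) (by rw [howq, hyo])
      rw [heq]
      exact h4
    · -- y x ∈ ⟨y' x⟩
      have hxw : x ∈ Subgroup.zpowers (g * y * g⁻¹ * x) := pg_crt_right hcy'x hcopk'
      have hy'w : g * y * g⁻¹ ∈ Subgroup.zpowers (g * y * g⁻¹ * x) := pg_crt_left hcy'x hcopk'
      have hyw : y ∈ Subgroup.zpowers (g * y * g⁻¹ * x) := by
        have h3 := mul_mem hmem (inv_mem hxw)
        rwa [mul_inv_cancel_right] at h3
      have h4 : y ∈ Subgroup.zpowers ((g * y * g⁻¹ * x) ^ q) :=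
        pg_mem_zpowers_pow how' hyw hypow
      have h5 : g * y * g⁻¹ ∈ Subgroup.zpowers ((g * y * g⁻¹ * x) ^ q) :=
        pg_mem_zpowers_pow how' hy'w hy'pow
      have howq : orderOf ((g * y * g⁻¹ * x) ^ q) = p ^ k := by
        rw [orderOf_pow, how', Nat.gcd_eq_right (dvd_mul_left q (p ^ k)),
          Nat.mul_div_cancel _ hq.pos]
      have heq : Subgroup.zpowers (g * y * g⁻¹) = Subgroup.zpowers ((g * y * g⁻¹ * x) ^ q) :=
        pg_zpowers_eq_of_le_of_card (Subgroup.zpowers_le.mpr h5) (by rw [howq, hoy'])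
      have h6 : y ∈ Subgroup.zpowers (g * y * g⁻¹) := by rw [heq]; exact h4
      have heq2 : Subgroup.zpowers y = Subgroup.zpowers (g * y * g⁻¹) :=
        pg_zpowers_eq_of_le_of_card (Subgroup.zpowers_le.mpr h6) (by rw [hoy', hyo])
      rw [heq2]
      exact Subgroup.mem_zpowers _
  -- ⟨y⟩ is normal
  have hPnormal : (Subgroup.zpowers y).Normal := by
    constructor
    rintro n ⟨j, rfl⟩ g
    show g * ((fun m : ℤ => y ^ m) j) * g⁻¹ ∈ Subgroup.zpowers y
    simp only []
    rw [← conj_zpow]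
    exact Subgroup.zpow_mem _ (hnorm g) j
  -- every q-th power is in ⟨y⟩
  have h_gq : ∀ g : H, g ^ q ∈ Subgroup.zpowers y := by
    intro g
    have hgpos : orderOf g ≠ 0 := (orderOf_pos g).ne'
    have hqq : ¬ q ∣ orderOf (g ^ q) := by
      intro hqd
      by_cases hqn : q ∣ orderOf g
      · have h2 : orderOf (g ^ q) = orderOf g / q := by
          rw [orderOf_pow, Nat.gcd_eq_right hqn]
        rw [h2] at hqd
        have hq2 : q ^ 2 ∣ orderOf g := by
          obtain ⟨t, ht⟩ := hqd
          refine ⟨t, ?_⟩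
          have h3 := Nat.div_mul_cancel hqn
          calc orderOf g = orderOf g / q * q := h3.symm
            _ = q * t * q := by rw [ht]
            _ = q ^ 2 * t := by ring
        set b := g ^ (orderOf g / q ^ 2) with hbdef
        have hob : orderOf b = q ^ 2 := by
          rw [hbdef, orderOf_pow, Nat.gcd_eq_right (Nat.div_dvd_of_dvd hq2),
            Nat.div_div_self hq2 hgpos]
        have hdvd := pg_q_order hC4 hp hq hqp hz hzo (g := b) (n := 2) hob
        rw [hob] at hdvd
        have := Nat.le_of_dvd hq.pos hdvd
        nlinarith [hq.one_lt]
      · have h2 : orderOf (g ^ q) = orderOf g := by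
          have hco : Nat.gcd (orderOf g) q = 1 :=
            Nat.Coprime.gcd_eq_one ((hq.coprime_iff_not_dvd.mpr hqn).symm)
          rw [orderOf_pow, hco, Nat.div_one]
        exact hqn (h2 ▸ hqd)
    have hppow : ∀ {r : ℕ}, r.Prime → r ∣ orderOf (g ^ q) → r = p := by
      intro r hr hrd
      rcases pg_two_primes hC4 hp hq hqp hz hzo hx hxo (g ^ q) hr hrd with hh | hh
      · exact hh
      · exact absurd (hh ▸ hrd) hqq
    have hordpow := Nat.eq_prime_pow_of_unique_prime_dvd (orderOf_pos (g ^ q)).ne' hppow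
    rw [← hy]
    exact pg_mem_sylow_of_normal P (by rw [hy]; exact hPnormal) hordpow
  -- the conjugation character
  set N := p ^ k with hNdef
  haveI : NeZero N := ⟨pow_ne_zero k hp.pos.ne'⟩
  have hzmod : ∀ a b : ℤ, ((a : ZMod N) = (b : ZMod N)) ↔ y ^ a = y ^ b := by
    intro a b
    rw [ZMod.intCast_eq_intCast_iff]
    constructor
    · intro hab
      have hd : (N : ℤ) ∣ b - a := Int.ModEq.dvd hab
      have h1 : y ^ (b - a) = 1 :=
        orderOf_dvd_iff_zpow_eq_one.mp (by rw [hyo]; exact_mod_cast hd)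
      calc y ^ a = y ^ a * y ^ (b - a) := by rw [h1, mul_one]
        _ = y ^ b := by rw [← zpow_add]; congr 1; ring
    · intro hab
      have h1 : y ^ (b - a) = 1 := by
        rw [zpow_sub, ← hab, mul_inv_cancel]
      have h2 : (orderOf y : ℤ) ∣ b - a := orderOf_dvd_iff_zpow_eq_one.mpr h1
      rw [hyo] at h2
      exact (Int.modEq_iff_dvd.mpr (by exact_mod_cast h2))
  have hex : ∀ g : H, ∃ j : ℤ, y ^ j = g * y * g⁻¹ := by
    intro g
    exact Subgroup.mem_zpowers_iff.mp (hnorm g)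
  choose e he using hex
  obtain ⟨φ₀, hφ₀⟩ := pg_build_hom y N e he hzmod
  set φ := φ₀.toHomUnits with hφdef
  have hkerφ : ∀ g : H, φ g = 1 ↔ g ∈ Subgroup.centralizer {y} := by
    intro g
    rw [Subgroup.mem_centralizer_iff]
    constructor
    · intro hg
      have h1 : φ₀ g = 1 := by
        have h2 := congrArg Units.val hg
        rwa [MonoidHom.coe_toHomUnits, Units.val_one] at h2
      have h3 : ((e g : ℤ) : ZMod N) = ((1 : ℤ) : ZMod N) := by
        rw [← hφ₀ g, h1]; push_cast; rfl
      have h4 : y ^ (e g) = y ^ (1 : ℤ) := (hzmod _ _).mp h3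
      rw [he g, zpow_one] at h4
      intro h hset
      rw [Set.mem_singleton_iff] at hset
      rw [hset]
      have h5 : g * y = y * g := by
        have h6 := congrArg (· * g) h4
        simpa [mul_assoc] using h6
      exact h5.symm
    · intro hcomm
      have h2 : g * y * g⁻¹ = y := by
        have h3 : y * g = g * y := hcomm y rfl
        rw [← h3, mul_assoc, mul_inv_cancel, mul_one]
      apply Units.ext
      rw [MonoidHom.coe_toHomUnits, Units.val_one, hφ₀ g]
      show ((e g : ℤ) : ZMod N) = 1
      have h4 : y ^ (e g) = y ^ (1 : ℤ) := by rw [he g, h2, zpow_one]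
      have h5 := (hzmod (e g) 1).mpr h4
      simpa using h5
  have hPK : Subgroup.zpowers y ≤ Subgroup.centralizer {y} := by
    rw [Subgroup.zpowers_le]
    rw [Subgroup.mem_centralizer_iff]
    intro h hset
    rw [Set.mem_singleton_iff] at hset
    subst hset
    rfl
  have hφgq : ∀ g : H, φ (g ^ q) = 1 := fun g => (hkerφ _).mpr (hPK (h_gq g))
  have hdvdpN : p ∣ N := by rw [hNdef]; exact dvd_pow_self p (by omega)
  set ψ := (ZMod.unitsMap hdvdpN).comp φ with hψdef
  have hψgq : ∀ g : H, ψ (g ^ q) = 1 := by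
    intro g
    rw [hψdef, MonoidHom.comp_apply, hφgq g, map_one]
  -- kernel of unitsMap has p-power order
  have hcardker : Nat.card (ZMod.unitsMap hdvdpN).ker = p ^ (k - 1) := by
    have hsurj := ZMod.unitsMap_surjective (m := N) hdvdpN
    have hrange : (ZMod.unitsMap hdvdpN).range = ⊤ := MonoidHom.range_eq_top.mpr hsurj
    have h1 := Subgroup.card_mul_index (ZMod.unitsMap hdvdpN).ker
    rw [Subgroup.index_ker, hrange] at h1
    have h2 : Nat.card ((⊤ : Subgroup (ZMod p)ˣ)) = p - 1 := by
      rw [Subgroup.card_top, Nat.card_eq_fintype_card, ZMod.card_units_eq_totient,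
        Nat.totient_prime hp]
    have h3 : Nat.card (ZMod N)ˣ = p ^ (k - 1) * (p - 1) := by
      rw [Nat.card_eq_fintype_card, ZMod.card_units_eq_totient, hNdef,
        Nat.totient_prime_pow hp (by omega)]
    rw [h2, h3] at h1
    exact Nat.eq_of_mul_eq_mul_right (by have := hp.one_lt; omega) h1
  have hψker : ψ.ker = Subgroup.centralizer {y} := by
    ext g
    rw [MonoidHom.mem_ker]
    constructor
    · intro hg
      have huq : (φ g) ^ q = 1 := by rw [← map_pow]; exact hφgq g
      have hordq : orderOf (φ g) ∣ q := orderOf_dvd_of_pow_eq_one huq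
      have humem : φ g ∈ (ZMod.unitsMap hdvdpN).ker := by
        rw [MonoidHom.mem_ker]
        exact hg
      have hordp : orderOf (φ g) ∣ p ^ (k - 1) := by
        have h1 : orderOf (⟨φ g, humem⟩ : (ZMod.unitsMap hdvdpN).ker) ∣
            Nat.card (ZMod.unitsMap hdvdpN).ker := orderOf_dvd_natCard _
        rwa [Subgroup.orderOf_mk, hcardker] at h1
      have hcop : Nat.Coprime q (p ^ (k - 1)) :=
        Nat.Coprime.pow_right _ ((Nat.coprime_primes hq hp).mpr hqp)
      have h2 : orderOf (φ g) ∣ 1 := by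
        have := Nat.dvd_gcd hordq hordp
        rwa [Nat.Coprime.gcd_eq_one hcop] at this
      have h3 : φ g = 1 := orderOf_eq_one_iff.mp (Nat.dvd_one.mp h2)
      exact (hkerφ g).mp h3
    · intro hg
      rw [hψdef, MonoidHom.comp_apply, (hkerφ g).mpr hg, map_one]
  have hindex : (Subgroup.centralizer ({y} : Set H)).index = Nat.card ψ.range := by
    rw [← hψker, Subgroup.index_ker]
  have hg0 : ∀ v : ψ.range, v ^ q = 1 := by
    rintro ⟨v, hv⟩
    obtain ⟨g, hgv⟩ := MonoidHom.mem_range.mp hv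
    apply Subtype.ext
    show ((⟨v, hv⟩ ^ q : ψ.range) : (ZMod p)ˣ) = 1
    rw [SubmonoidClass.coe_pow]
    show v ^ q = 1
    rw [← hgv, ← map_pow, hψgq g]
  have hrangecard : Nat.card ψ.range ∣ q := by
    obtain ⟨g₀, hgen⟩ := IsCyclic.exists_generator (α := ψ.range)
    have hcard : orderOf g₀ = Nat.card ψ.range := by
      rw [orderOf_eq_card_of_forall_mem_zpowers hgen]
    rw [← hcard]
    exact orderOf_dvd_of_pow_eq_one (hg0 g₀)
  constructor
  · rcases hq.eq_one_or_self_of_dvd _ hrangecard with h1 | h1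
    · left; rw [hindex, h1]
    · right; rw [hindex, h1]
  · intro hp2 S
    have hKtop : Subgroup.centralizer ({y} : Set H) = ⊤ := by
      rw [← Subgroup.index_eq_one, hindex]
      have h1 : Nat.card ψ.range ∣ Nat.card (ZMod p)ˣ := Subgroup.card_subgroup_dvd_card _
      have h2 : Nat.card (ZMod p)ˣ = 1 := by
        rw [Nat.card_eq_fintype_card, ZMod.card_units_eq_totient, Nat.totient_prime hp, hp2]
      rw [h2] at h1
      exact Nat.dvd_one.mp h1
    have hcommy : ∀ b : H, Commute y b := by
      intro b
      have hb : b ∈ Subgroup.centralizer ({y} : Set H) := by rw [hKtop]; trivial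
      exact (Subgroup.mem_centralizer_iff.mp hb y rfl)
    refine ⟨?_, ?_, ?_⟩
    · rw [eq_bot_iff]
      rintro a ⟨ha1, ha2⟩
      obtain ⟨c, hc⟩ := IsPGroup.iff_orderOf.mp S.2 (⟨a, ha2⟩ : (S : Subgroup H))
      rw [Subgroup.orderOf_mk] at hc
      have hdvd : orderOf a ∣ N := by rw [← hyo]; exact orderOf_dvd_of_mem_zpowers ha1
      rw [hc, hNdef] at hdvd
      have hc0 : c = 0 := by
        by_contra hc0
        have h1 : q ∣ p ^ k := dvd_trans (dvd_pow_self q hc0) hdvd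
        have h2 := hq.dvd_of_dvd_pow h1
        exact hqp ((Nat.prime_dvd_prime_iff_eq hq hp).mp h2)
      rw [hc0, pow_zero] at hc
      have ha1' : a = 1 := orderOf_eq_one_iff.mp hc
      rw [ha1']
      exact Subgroup.one_mem ⊥
    · -- join is everything
      have hidx0 : (P : Subgroup H).index ≠ 0 := Subgroup.index_ne_zero_of_finite
      have hup : ∀ {r : ℕ}, r.Prime → r ∣ (P : Subgroup H).index → r = q := by
        intro r hr hrd
        haveI := Fact.mk hr
        have h1 : r ∣ Nat.card H := hrd.trans (Subgroup.index_dvd_card _)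
        obtain ⟨g, hgr⟩ := exists_prime_orderOf_dvd_card' r h1
        rcases pg_two_primes hC4 hp hq hqp hz hzo hx hxo g hr (by rw [hgr]) with h2 | h2
        · exfalso
          rw [h2] at hrd
          exact P.not_dvd_index hrd
        · exact h2
      have hPidx := Nat.eq_prime_pow_of_unique_prime_dvd hidx0 hup
      set t := (P : Subgroup H).index.primeFactorsList.length with htdef
      have hcardP : Nat.card (P : Subgroup H) = p ^ k := by
        rw [hy, Nat.card_zpowers, hyo, hNdef]
      have hcardH : Nat.card H = p ^ k * q ^ t := by
        have h1 := Subgroup.card_mul_index (P : Subgroup H)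
        rw [← h1, hPidx, hcardP]
      obtain ⟨s, hs⟩ := IsPGroup.iff_card.mp S.2
      have hqindex : ¬ q ∣ (S : Subgroup H).index := S.not_dvd_index
      have hts : q ^ t ∣ q ^ s := by
        have h1 := Subgroup.card_mul_index (S : Subgroup H)
        rw [hs] at h1
        have h2 : q ^ t ∣ q ^ s * (S : Subgroup H).index := by
          rw [h1, hcardH]
          exact dvd_mul_left (q ^ t) (p ^ k)
        exact (Nat.Coprime.pow_left t ((hq.coprime_iff_not_dvd).mpr hqindex)).dvd_of_dvd_mul_right h2
      have hcardJ : Nat.card ↥(Subgroup.zpowers y ⊔ (S : Subgroup H)) = Nat.card H := by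
        have h1 : p ^ k ∣ Nat.card ↥(Subgroup.zpowers y ⊔ (S : Subgroup H)) := by
          have h0 := Subgroup.card_dvd_of_le
            (le_sup_left : Subgroup.zpowers y ≤ Subgroup.zpowers y ⊔ (S : Subgroup H))
          rwa [Nat.card_zpowers, hyo, hNdef] at h0
        have h2 : q ^ t ∣ Nat.card ↥(Subgroup.zpowers y ⊔ (S : Subgroup H)) := hts.trans (by
          have h0 := Subgroup.card_dvd_of_le
            (le_sup_right : (S : Subgroup H) ≤ Subgroup.zpowers y ⊔ (S : Subgroup H))
          rwa [hs] at h0)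
        have h3 : p ^ k * q ^ t ∣ Nat.card ↥(Subgroup.zpowers y ⊔ (S : Subgroup H)) :=
          Nat.Coprime.mul_dvd_of_dvd_of_dvd
            (Nat.Coprime.pow _ _ ((Nat.coprime_primes hp hq).mpr hpq)) h1 h2
        have h4 : Nat.card ↥(Subgroup.zpowers y ⊔ (S : Subgroup H)) ∣ Nat.card H :=
          Subgroup.card_subgroup_dvd_card _
        rw [hcardH]
        exact Nat.dvd_antisymm (hcardH ▸ h4) h3
      exact Subgroup.eq_top_of_card_eq _ hcardJ
    · intro a ha b hb
      obtain ⟨j, hj⟩ := Subgroup.mem_zpowers_iff.mp ha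
      rw [← hj]
      exact (hcommy b).zpow_left j

end Main

theorem centralizer_index_of_qelement_center_nonelementary {G : Type*} [Group G] [Finite G]
    (h : pgC4Free G) (hG : ¬ IsPrimePow (Nat.card G))
    (p : ℕ) (hp : p.Prime) (hZ : IsPGroup p (Subgroup.center G))
    (z : G) (hz : z ∈ Subgroup.center G) (hzo : orderOf z = p ^ 2)
    (q : ℕ) (hq : q.Prime) (hqp : q ≠ p)
    (x : G) (hx1 : x ≠ 1) (hxq : ∃ n : ℕ, orderOf x = q ^ n) :
    ∀ P : Sylow p (Subgroup.centralizer ({x} : Set G)),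
      ∀ y : (Subgroup.centralizer ({x} : Set G)),
        (P : Subgroup (Subgroup.centralizer ({x} : Set G))) = Subgroup.zpowers y →
          ((Subgroup.centralizer ({y} :
              Set (Subgroup.centralizer ({x} : Set G)))).index = 1 ∨
           (Subgroup.centralizer ({y} :
              Set (Subgroup.centralizer ({x} : Set G)))).index = q) ∧
          (p = 2 →
            ∀ S : Sylow q (Subgroup.centralizer ({x} : Set G)),
              Subgroup.zpowers y ⊓ (S : Subgroup (Subgroup.centralizer ({x} : Set G))) = ⊥ ∧
              Subgroup.zpowers y ⊔ (S : Subgroup (Subgroup.centralizer ({x} : Set G))) = ⊤ ∧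
              ∀ a ∈ Subgroup.zpowers y,
                ∀ b ∈ (S : Subgroup (Subgroup.centralizer ({x} : Set G))), Commute a b) := by
  intro P y hy
  have hxC : x ∈ Subgroup.centralizer ({x} : Set G) := by
    rw [Subgroup.mem_centralizer_iff]
    intro g hg
    rw [Set.mem_singleton_iff] at hg
    rw [hg]
  have hzC : z ∈ Subgroup.centralizer ({x} : Set G) := by
    rw [Subgroup.mem_centralizer_iff]
    intro g hg
    rw [Set.mem_singleton_iff] at hg
    rw [hg]
    exact Subgroup.mem_center_iff.mp hz x
  have hC4C : pgC4Free (Subgroup.centralizer ({x} : Set G)) :=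
    h.subgroup (Subgroup.centralizer ({x} : Set G))
  have hzCc : (⟨z, hzC⟩ : Subgroup.centralizer ({x} : Set G)) ∈
      Subgroup.center (Subgroup.centralizer ({x} : Set G)) := by
    rw [Subgroup.mem_center_iff]
    rintro ⟨g, hg⟩
    apply Subtype.ext
    exact Subgroup.mem_center_iff.mp hz g
  have hxCc : (⟨x, hxC⟩ : Subgroup.centralizer ({x} : Set G)) ∈
      Subgroup.center (Subgroup.centralizer ({x} : Set G)) := by
    rw [Subgroup.mem_center_iff]
    rintro ⟨g, hg⟩
    apply Subtype.ext
    exact (Subgroup.mem_centralizer_iff.mp hg x rfl).symm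
  have hzoC : orderOf (⟨z, hzC⟩ : Subgroup.centralizer ({x} : Set G)) = p ^ 2 := by
    rw [Subgroup.orderOf_mk]; exact hzo
  obtain ⟨n, hn⟩ := hxq
  have hxn : orderOf (⟨x, hxC⟩ : Subgroup.centralizer ({x} : Set G)) = q ^ n := by
    rw [Subgroup.orderOf_mk]; exact hn
  have hxodvd := pg_q_order hC4C hp hq hqp hzCc hzoC hxn
  have hxne : orderOf (⟨x, hxC⟩ : Subgroup.centralizer ({x} : Set G)) ≠ 1 := by
    intro e
    exact hx1 (congrArg Subtype.val (orderOf_eq_one_iff.mp e))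
  have hxoC : orderOf (⟨x, hxC⟩ : Subgroup.centralizer ({x} : Set G)) = q :=
    (hq.eq_one_or_self_of_dvd _ hxodvd).resolve_left hxne
  exact pg_main hC4C hp hq hqp hzCc hzoC hxCc hxoC P y hy
end
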